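/- arXiv:2008.04668 — 3 statements merged into one kernel-verified Lean document; each statement's English description precedes it below -/
import Mathlib

section
/- Let 𝒢 be an ultragraph without sinks. The ultragraph groupoid 𝔊_𝒢 is strongly ℤ-graded (that is, (𝔊_𝒢)_m (𝔊_𝒢)_n = (𝔊_𝒢)_{m+n} for all m, n ∈ ℤ) if and only if the following two conditions hold: (1) 𝒢 has no infinite emitters (no vertex v with s⁻¹(v) infinite); and (2) for every k ∈ ℕ and every infinite path p ∈ 𝔭^∞, there exist an initial subpath x of p and a finite path y ∈ 𝒢* such that r(x) = r(y) and |y| − |x| = k. -/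
set_option synthInstance.maxHeartbeats 1000000
set_option maxHeartbeats 1000000

noncomputable section
open Classical TensorProduct

/-- An ultragraph: countable sets of vertices and edges (countability is imposed in the
theorems), a source map and a range map taking nonempty sets of vertices. -/
structure Ultragraph (V E : Type) where
  s : E → V
  r : E → Set V
  r_nonempty : ∀ e, (r e).Nonempty

namespace Ultragraph

variable {V E : Type}

/-- Membership in `𝒢⁰`: the smallest collection of subsets of `G⁰` containing the
singletons and the ranges of edges, closed under finite unions and intersections. -/
inductive IsG0 (U : Ultragraph V E) : Set V → Prop
  | vertex (v : V) : IsG0 U {v}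
  | range (e : E) : IsG0 U (U.r e)
  | union {A B : Set V} : IsG0 U A → IsG0 U B → IsG0 U (A ∪ B)
  | inter {A B : Set V} : IsG0 U A → IsG0 U B → IsG0 U (A ∩ B)

variable (U : Ultragraph V E)

/-- No sinks: every vertex emits at least one edge. -/
def HasNoSinks : Prop := ∀ v : V, ∃ e : E, U.s e = v

/-- No vertex is an infinite emitter. -/
def NoInfiniteEmitters : Prop := ∀ v : V, {e : E | U.s e = v}.Finite

/-- A regular vertex: `0 < |s⁻¹(v)| < ∞`. -/
def IsRegular (v : V) : Prop := {e : E | U.s e = v}.Nonempty ∧ {e : E | U.s e = v}.Finite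

/-- Two edges are composable when the source of the second lies in the range of the first. -/
def Adj (e f : E) : Prop := U.s f ∈ U.r e

/-- A (possibly empty) compatible list of edges. -/
def IsEdgePath (l : List E) : Prop := List.Chain' U.Adj l

/-- Range of a list of edges: the range of its last edge (junk value `∅` on `[]`). -/
def rList (l : List E) : Set V :=
  match l.getLast? with
  | some e => U.r e
  | none => ∅

/-- A finite path in `𝒢*`: either an element of `𝒢⁰` (length `0`) or a nonempty
compatible list of edges. -/
def IsFPath : Set V ⊕ List E → Prop
  | Sum.inl A => U.IsG0 A
  | Sum.inr l => l ≠ [] ∧ U.IsEdgePath l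

/-- Range of a finite path. -/
def rF : Set V ⊕ List E → Set V
  | Sum.inl A => A
  | Sum.inr l => U.rList l

/-- "The source of the finite path `α` is the vertex `v`". -/
def sFMatch : Set V ⊕ List E → V → Prop
  | Sum.inl A, v => A = ({v} : Set V)
  | Sum.inr l, v => ∃ e, l.head? = some e ∧ U.s e = v

/-- A cycle: a nonempty path whose source vertex belongs to its range. -/
def IsCycle (c : List E) : Prop :=
  c ≠ [] ∧ U.IsEdgePath c ∧ ∃ e, c.head? = some e ∧ U.s e ∈ U.rList c

/-- A first-return path based at `v`. -/
def IsFirstReturn (v : V) (c : List E) : Prop :=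
  c ≠ [] ∧ U.IsEdgePath c ∧ (∃ e, c.head? = some e ∧ U.s e = v) ∧ v ∈ U.rList c ∧
    ∀ (i : ℕ) (h : i < c.length), 0 < i → U.s (c.get ⟨i, h⟩) ≠ v

/-- Condition (K). -/
def ConditionK : Prop :=
  ∀ v : V, (∀ c : List E, ¬ U.IsFirstReturn v c) ∨
    ∃ c₁ c₂ : List E, U.IsFirstReturn v c₁ ∧ U.IsFirstReturn v c₂ ∧ c₁ ≠ c₂

/-- `w ≥ v`: there is a finite path with source `w` whose range contains `v`. -/
def VGe (w v : V) : Prop := ∃ α : Set V ⊕ List E, U.IsFPath α ∧ U.sFMatch α w ∧ v ∈ U.rF α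

/-- An ultrapath, given as raw data `(α, A)` (a list of edges and a range set):
the list is compatible, `A ∈ 𝒢⁰` and `A ⊆ r(α)` when `α` is nonempty.
Length-zero ultrapaths `( [], A )` are the elements `A ∈ 𝒢⁰`. -/
def IsUPath (x : List E × Set V) : Prop :=
  U.IsEdgePath x.1 ∧ U.IsG0 x.2 ∧ ∀ e, x.1.getLast? = some e → x.2 ⊆ U.r e

/-- The "source" of an ultrapath, as a set: the singleton on the source of its first edge,
or the set itself in length zero. -/
def srcSet (x : List E × Set V) : Set V :=
  match x.1.head? with
  | some e => {U.s e}
  | none => x.2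

/-- The concatenation `x · y` is defined. -/
def CanConcatU (x y : List E × Set V) : Prop := (x.2 ∩ U.srcSet y).Nonempty

/-- An infinite path. -/
def IsIPath (p : ℕ → E) : Prop := ∀ n : ℕ, U.s (p (n + 1)) ∈ U.r (p n)

/-- The principal filter of `A` in the meet-semilattice `𝒢⁰`. -/
def principalFilter (A : Set V) : Set (Set V) := {B | U.IsG0 B ∧ A ⊆ B}

/-- A filter in `𝒢⁰`. -/
def IsFilterG0 (F : Set (Set V)) : Prop :=
  (∀ B ∈ F, U.IsG0 B) ∧ (∅ : Set V) ∉ F ∧ (∀ A ∈ F, ∀ B ∈ F, A ∩ B ∈ F) ∧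
    ∀ A ∈ F, ∀ B : Set V, U.IsG0 B → A ⊆ B → B ∈ F

/-- An ultraset: an element of `𝒢⁰` whose principal filter is an ultrafilter in `𝒢⁰`. -/
def IsUltraset (A : Set V) : Prop :=
  U.IsG0 A ∧ U.IsFilterG0 (U.principalFilter A) ∧
    ∀ F : Set (Set V), U.IsFilterG0 F → U.principalFilter A ⊆ F → F = U.principalFilter A

/-- `A` is an infinite emitter (as a set). -/
def InfEmitterSet (A : Set V) : Prop := {e : E | U.s e ∈ A}.Infinite

end Ultragraph

/-- Concatenation of ultrapaths (raw operation). -/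
def concatU {V E : Type} (x y : List E × Set V) : List E × Set V :=
  (x.1 ++ y.1, if y.1 = [] then x.2 ∩ y.2 else y.2)

/-- Prepend a finite list of edges to an infinite path. -/
def prependL {E : Type} (l : List E) (p : ℕ → E) : ℕ → E :=
  fun n => if h : n < l.length then l.get ⟨n, h⟩ else p (n - l.length)

/-- The periodic infinite path `ccc⋯` determined by a nonempty list `c`. -/
def periodicL {E : Type} (c : List E) (hc : c ≠ []) : ℕ → E :=
  fun n => c.get ⟨n % c.length, Nat.mod_lt n (List.length_pos_iff.mpr hc)⟩

/-- Shift of an infinite path: `τ_{>m}`. -/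
def shiftL {E : Type} (m : ℕ) (p : ℕ → E) : ℕ → E := fun n => p (n + m)

/-- Tail-equivalence of infinite paths. -/
def IPEquiv {E : Type} (p q : ℕ → E) : Prop := ∃ m n : ℕ, shiftL m p = shiftL n q

namespace Ultragraph

variable {V E : Type} (U : Ultragraph V E)

/-- Elements of `X_𝒢 = Y_∞ ∪ 𝔭^∞` (raw data): a finite ultrapath or an infinite path. -/
abbrev XType (V E : Type) : Type := (List E × Set V) ⊕ (ℕ → E)

/-- Concatenation of an ultrapath with an element of `X_𝒢` (raw operation). -/
def concatXel (x : List E × Set V) : XType V E → XType V E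
  | Sum.inl y => Sum.inl (concatU x y)
  | Sum.inr p => Sum.inr (prependL x.1 p)

/-- Membership in `X_𝒢`. -/
def IsXEl : XType V E → Prop
  | Sum.inl y => U.IsUPath y ∧ U.IsUltraset y.2 ∧ U.InfEmitterSet y.2
  | Sum.inr p => U.IsIPath p

/-- The concatenation `x · μ` is defined. -/
def CanConcatX (x : List E × Set V) : XType V E → Prop
  | Sum.inl y => U.CanConcatU x y
  | Sum.inr p => U.s (p 0) ∈ x.2

/-- Raw triples, of which the ultragraph groupoid consists. -/
abbrev Trip (V E : Type) : Type := XType V E × ℤ × XType V E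

/-- Membership in the ultragraph groupoid
`𝔊_𝒢 = {(x·μ, |x|−|y|, y·μ) : x, y ∈ 𝔭, μ ∈ X_𝒢, r(x) = r(y), x·μ, y·μ ∈ X_𝒢}`. -/
def InGrpd (g : Trip V E) : Prop :=
  ∃ (x y : List E × Set V) (μ : XType V E),
    U.IsUPath x ∧ U.IsUPath y ∧ U.IsXEl μ ∧ x.2 = y.2 ∧
    U.CanConcatX x μ ∧ U.CanConcatX y μ ∧
    U.IsXEl (concatXel x μ) ∧ U.IsXEl (concatXel y μ) ∧
    g = (concatXel x μ, (x.1.length : ℤ) - (y.1.length : ℤ), concatXel y μ)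

end Ultragraph

/-- Composition in the ultragraph groupoid: `(u,k,v)(v,l,w) = (u,k+l,w)` (raw operation). -/
def compT {V E : Type} (a b : Ultragraph.Trip V E) : Ultragraph.Trip V E :=
  (a.1, a.2.1 + b.2.1, b.2.2)

namespace Ultragraph

variable {V E : Type} (U : Ultragraph V E)

/-- The degree-`n` component `(𝔊_𝒢)_n` of the ℤ-graded ultragraph groupoid. -/
def gradeSet (n : ℤ) : Set (Trip V E) := {g | U.InGrpd g ∧ g.2.1 = n}

/-- Product of two subsets of the groupoid: `ST = {ab : a ∈ S, b ∈ T composable}`. -/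
def setMulG (S T : Set (Trip V E)) : Set (Trip V E) :=
  {c | ∃ a ∈ S, ∃ b ∈ T, a.2.2 = b.1 ∧ c = compT a b}

/-- The carrier of the ultragraph groupoid `𝔊_𝒢`. -/
def Grpd : Type := {g : Trip V E // U.InGrpd g}

/-- The set `𝒜(x,y)`. -/
def ASetRaw (x y : List E × Set V) : Set (Trip V E) :=
  {g | ∃ μ : XType V E, U.IsXEl μ ∧ U.CanConcatX x μ ∧ U.CanConcatX y μ ∧
      U.IsXEl (concatXel x μ) ∧ U.IsXEl (concatXel y μ) ∧
      g = (concatXel x μ, (x.1.length : ℤ) - (y.1.length : ℤ), concatXel y μ)}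

/-- The set `𝒜(x,y)` inside the groupoid. -/
def ASet (x y : List E × Set V) : Set U.Grpd := {g | g.1 ∈ U.ASetRaw x y}

/-- The basic set `𝒜(x,y,K,Q)`. -/
def ABasic (x y : List E × Set V) (Ke : Set E) (Q : Set (Set V)) : Set U.Grpd :=
  U.ASet x y \
    ((⋃ e ∈ Ke, U.ASet (concatU x ([e], U.r e)) (concatU y ([e], U.r e))) ∪
      ⋃ C ∈ Q, U.ASet (concatU x (([] : List E), C)) (concatU y (([] : List E), C)))

/-- The collection of all basic open sets `𝒜(x,y,K,Q)`. -/
def BasicSets : Set (Set U.Grpd) :=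
  {S | ∃ (x y : List E × Set V) (Ke : Set E) (Q : Set (Set V)),
      U.IsUPath x ∧ U.IsUPath y ∧ x.2 = y.2 ∧
      (∀ e ∈ Ke, U.s e ∈ x.2) ∧ Ke.Finite ∧ (∀ C ∈ Q, U.IsG0 C) ∧ Q.Finite ∧
      S = U.ABasic x y Ke Q}

/-- The topology of the ultragraph groupoid, generated by the sets `𝒜(x,y,K,Q)`. -/
instance : TopologicalSpace U.Grpd := TopologicalSpace.generateFrom U.BasicSets

/-- The unit space `𝔊_𝒢⁽⁰⁾ = {(μ,0,μ) : μ ∈ X_𝒢}` inside the groupoid. -/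
def unitSpaceSet : Set U.Grpd := {g | g.1.2.1 = 0 ∧ g.1.1 = g.1.2.2}

end Ultragraph

/-- The source unit `s(u,k,v) = (v,0,v)` of a raw triple. -/
def srcT {V E : Type} (g : Ultragraph.Trip V E) : Ultragraph.Trip V E := (g.2.2, 0, g.2.2)

/-- The range unit `r(u,k,v) = (u,0,u)` of a raw triple. -/
def rngT {V E : Type} (g : Ultragraph.Trip V E) : Ultragraph.Trip V E := (g.1, 0, g.1)

namespace Ultragraph

variable {V E : Type} (U : Ultragraph V E)

/-- A subset `D` of the unit space is invariant if `s(γ) ∈ D` implies `r(γ) ∈ D`. -/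
def InvariantSet (D : Set U.Grpd) : Prop :=
  ∀ g : U.Grpd, ∀ (h1 : U.InGrpd (srcT g.1)) (h2 : U.InGrpd (rngT g.1)),
    (⟨srcT g.1, h1⟩ : U.Grpd) ∈ D → (⟨rngT g.1, h2⟩ : U.Grpd) ∈ D

/-- The source of `g` lies in `D`. -/
def SrcInD (D : Set U.Grpd) (g : U.Grpd) : Prop :=
  ∃ h : U.InGrpd (srcT g.1), (⟨srcT g.1, h⟩ : U.Grpd) ∈ D

/-- The range of `g` lies in `D`. -/
def RngInD (D : Set U.Grpd) (g : U.Grpd) : Prop :=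
  ∃ h : U.InGrpd (rngT g.1), (⟨rngT g.1, h⟩ : U.Grpd) ∈ D

/-- The restriction `𝔊_𝒢|_D` of the groupoid to a subset `D` of the unit space. -/
def RestrSet (D : Set U.Grpd) : Set U.Grpd := {g | U.SrcInD D g ∧ U.RngInD D g}

/-- The ultragraph groupoid is minimal: the unit space has no nontrivial open
invariant subsets. -/
def IsMinimalGrpd : Prop :=
  ∀ D : Set U.Grpd, D ⊆ U.unitSpaceSet →
    IsOpen {u : U.unitSpaceSet | (u : U.Grpd) ∈ D} → U.InvariantSet D →
      D = ∅ ∨ D = U.unitSpaceSet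

end Ultragraph


namespace Ultragraph

variable {V E : Type}

/-- Generators of the ultragraph Leavitt path algebra: `p_A` (`A ∈ 𝒢⁰`), `s_e`, `s*_e`. -/
inductive LGen (U : Ultragraph V E) : Type
  | pr : {A : Set V // U.IsG0 A} → LGen U
  | ed : E → LGen U
  | st : E → LGen U

variable (K : Type) [Field K] (U : Ultragraph V E)

/-- The defining relations of the ultragraph Leavitt path algebra. -/
inductive LRel : FreeAlgebra K (LGen U) → FreeAlgebra K (LGen U) → Prop
  | pEmpty (h : U.IsG0 (∅ : Set V)) :
      LRel (FreeAlgebra.ι K (LGen.pr ⟨∅, h⟩)) 0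
  | pInter (A B : {A : Set V // U.IsG0 A}) :
      LRel (FreeAlgebra.ι K (LGen.pr A) * FreeAlgebra.ι K (LGen.pr B))
        (FreeAlgebra.ι K (LGen.pr ⟨A.1 ∩ B.1, IsG0.inter A.2 B.2⟩))
  | pUnion (A B : {A : Set V // U.IsG0 A}) :
      LRel (FreeAlgebra.ι K (LGen.pr ⟨A.1 ∪ B.1, IsG0.union A.2 B.2⟩))
        (FreeAlgebra.ι K (LGen.pr A) + FreeAlgebra.ι K (LGen.pr B) -
          FreeAlgebra.ι K (LGen.pr ⟨A.1 ∩ B.1, IsG0.inter A.2 B.2⟩))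
  | sLeft (e : E) :
      LRel (FreeAlgebra.ι K (LGen.pr ⟨{U.s e}, IsG0.vertex (U.s e)⟩) * FreeAlgebra.ι K (LGen.ed e))
        (FreeAlgebra.ι K (LGen.ed e))
  | sRight (e : E) :
      LRel (FreeAlgebra.ι K (LGen.ed e) * FreeAlgebra.ι K (LGen.pr ⟨U.r e, IsG0.range e⟩))
        (FreeAlgebra.ι K (LGen.ed e))
  | stLeft (e : E) :
      LRel (FreeAlgebra.ι K (LGen.pr ⟨U.r e, IsG0.range e⟩) * FreeAlgebra.ι K (LGen.st e))
        (FreeAlgebra.ι K (LGen.st e))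
  | stRight (e : E) :
      LRel (FreeAlgebra.ι K (LGen.st e) * FreeAlgebra.ι K (LGen.pr ⟨{U.s e}, IsG0.vertex (U.s e)⟩))
        (FreeAlgebra.ι K (LGen.st e))
  | ortho (e f : E) (h : e ≠ f) :
      LRel (FreeAlgebra.ι K (LGen.st e) * FreeAlgebra.ι K (LGen.ed f)) 0
  | ck1 (e : E) :
      LRel (FreeAlgebra.ι K (LGen.st e) * FreeAlgebra.ι K (LGen.ed e))
        (FreeAlgebra.ι K (LGen.pr ⟨U.r e, IsG0.range e⟩))
  | ck2 (v : V) (h : U.IsRegular v) :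
      LRel (FreeAlgebra.ι K (LGen.pr ⟨{v}, IsG0.vertex v⟩))
        (h.2.toFinset.sum fun e => FreeAlgebra.ι K (LGen.ed e) * FreeAlgebra.ι K (LGen.st e))

/-- The ultragraph Leavitt path algebra `L_K(𝒢)`, presented by generators and relations.
(For a non-unital `L_K(𝒢)` this is its unitalization; the algebra itself is the
subspace `Lsub` spanned by the monomials `s_α p_A s*_β`.) -/
abbrev LPA : Type := RingQuot (LRel K U)

/-- The generator `p_A`. -/
def pGen (A : Set V) (h : U.IsG0 A) : LPA K U :=
  RingQuot.mkAlgHom K (LRel K U) (FreeAlgebra.ι K (LGen.pr ⟨A, h⟩))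

/-- The generator `s_e`. -/
def sGen (e : E) : LPA K U :=
  RingQuot.mkAlgHom K (LRel K U) (FreeAlgebra.ι K (LGen.ed e))

/-- The generator `s*_e`. -/
def stGen (e : E) : LPA K U :=
  RingQuot.mkAlgHom K (LRel K U) (FreeAlgebra.ι K (LGen.st e))

/-- `s_α` for a list of edges `α`. -/
def sPath (l : List E) : LPA K U := (l.map (sGen K U)).prod

/-- `s*_α` for a list of edges `α`. -/
def stPath (l : List E) : LPA K U := (l.reverse.map (stGen K U)).prod

/-- The degree-`n` homogeneous component
`L_K(𝒢)_n = span_K { s_α p_A s*_β : |α| − |β| = n }`. -/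
def homComp (n : ℤ) : Submodule K (LPA K U) :=
  Submodule.span K {x : LPA K U | ∃ (α β : List E) (A : Set V) (hA : U.IsG0 A),
    (α.length : ℤ) - (β.length : ℤ) = n ∧
    x = sPath K U α * pGen K U A hA * stPath K U β}

/-- The Leavitt path algebra `L_K(𝒢)` itself: the span of all monomials `s_α p_A s*_β`
inside the (possibly unitalized) presented algebra. -/
def Lsub : Submodule K (LPA K U) :=
  Submodule.span K {x : LPA K U | ∃ (α β : List E) (A : Set V) (hA : U.IsG0 A),
    x = sPath K U α * pGen K U A hA * stPath K U β}

/-- `s_α` for a finite path `α ∈ 𝒢*` (with `s_A = p_A` in length zero). -/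
def sFMono : (α : Set V ⊕ List E) → U.IsFPath α → LPA K U
  | Sum.inl A, h => pGen K U A h
  | Sum.inr l, _ => sPath K U l

/-- `s*_α` for a finite path `α ∈ 𝒢*` (with `s*_A = p_A` in length zero). -/
def stFMono : (α : Set V ⊕ List E) → U.IsFPath α → LPA K U
  | Sum.inl A, h => pGen K U A h
  | Sum.inr l, _ => stPath K U l

/-- A (two-sided) ideal of `L_K(𝒢)` (sitting inside the presented algebra). -/
def IsTwoSidedIdealOfL (I : Set (LPA K U)) : Prop :=
  I ⊆ (Lsub K U : Set (LPA K U)) ∧ (0 : LPA K U) ∈ I ∧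
    (∀ a ∈ I, ∀ b ∈ I, a + b ∈ I) ∧ (∀ a ∈ I, -a ∈ I) ∧
    (∀ k : K, ∀ a ∈ I, k • a ∈ I) ∧
    ∀ a ∈ I, ∀ x ∈ (Lsub K U : Set (LPA K U)), a * x ∈ I ∧ x * a ∈ I

/-- A right ideal of `L_K(𝒢)`. -/
def IsRightIdealOfL (I : Set (LPA K U)) : Prop :=
  I ⊆ (Lsub K U : Set (LPA K U)) ∧ (0 : LPA K U) ∈ I ∧
    (∀ a ∈ I, ∀ b ∈ I, a + b ∈ I) ∧ (∀ a ∈ I, -a ∈ I) ∧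
    (∀ k : K, ∀ a ∈ I, k • a ∈ I) ∧
    ∀ a ∈ I, ∀ x ∈ (Lsub K U : Set (LPA K U)), a * x ∈ I

/-- A left ideal of `L_K(𝒢)`. -/
def IsLeftIdealOfL (I : Set (LPA K U)) : Prop :=
  I ⊆ (Lsub K U : Set (LPA K U)) ∧ (0 : LPA K U) ∈ I ∧
    (∀ a ∈ I, ∀ b ∈ I, a + b ∈ I) ∧ (∀ a ∈ I, -a ∈ I) ∧
    (∀ k : K, ∀ a ∈ I, k • a ∈ I) ∧
    ∀ a ∈ I, ∀ x ∈ (Lsub K U : Set (LPA K U)), x * a ∈ I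

/-- A subset of `L_K(𝒢)` is graded if each of its elements is a sum of homogeneous
elements lying in it. -/
def IsGradedSet (I : Set (LPA K U)) : Prop :=
  I ⊆ (AddSubgroup.closure {a : LPA K U | a ∈ I ∧ ∃ n : ℤ, a ∈ homComp K U n} :
    Set (LPA K U))

/-- The right ideal of `L_K(𝒢)` generated by a set. -/
def rIdealGen (S : Set (LPA K U)) : Set (LPA K U) :=
  ⋂₀ {I : Set (LPA K U) | IsRightIdealOfL K U I ∧ S ⊆ I}

/-- The left ideal of `L_K(𝒢)` generated by a set. -/
def lIdealGen (S : Set (LPA K U)) : Set (LPA K U) :=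
  ⋂₀ {I : Set (LPA K U) | IsLeftIdealOfL K U I ∧ S ⊆ I}

/-- Powers of an ideal: `J, J², J³, …` (as sets, `idealPow J n = J^{n+1}`). -/
def idealPow (J : Set (LPA K U)) : ℕ → Set (LPA K U)
  | 0 => J
  | n + 1 => (AddSubgroup.closure
      {z : LPA K U | ∃ a ∈ J, ∃ b ∈ idealPow J n, z = a * b} : Set (LPA K U))

end Ultragraph

namespace Ultragraph

variable {V E : Type} (U : Ultragraph V E)

/-- Condition (2) of the strong-grading criterion: for every `k ∈ ℕ` and every infinite
path `p`, there are an initial subpath `x` of `p` and a finite path `y ∈ 𝒢*` with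
`r(x) = r(y)` and `|y| − |x| = k`. -/
def GradedCond2 : Prop :=
  ∀ (k : ℕ) (p : ℕ → E), U.IsIPath p →
    ∃ n : ℕ, 0 < n ∧ ∃ y : List E, y ≠ [] ∧ U.IsEdgePath y ∧
      U.rList y = U.r (p (n - 1)) ∧ (y.length : ℤ) - (n : ℤ) = (k : ℤ)

variable (K : Type) [Field K]

/-- The projection onto the degree-`n` homogeneous component (obtained by choice from the
internal decomposition of the grading; `0` if no such family of projections exists). -/
noncomputable def gradedProj (n : ℤ) : LPA K U →ₗ[K] LPA K U :=
  if h : ∃ P : ℤ → (LPA K U →ₗ[K] LPA K U),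
      (∀ (m : ℤ) (x : LPA K U), P m x ∈ homComp K U m) ∧
      (∀ m : ℤ, ∀ x ∈ homComp K U m, P m x = x) ∧
      (∀ m k' : ℤ, m ≠ k' → ∀ x ∈ homComp K U k', P m x = 0)
  then h.choose n else 0

/-- Multiplication of the smash product `L_K(𝒢) # ℤ`:
`(a p_m)(b p_n) = a·b_{m−n} p_n`, where elements of `L_K(𝒢) # ℤ` are finitely
supported functions `ℤ →₀ L_K(𝒢)`. -/
noncomputable def smashMul (x y : ℤ →₀ LPA K U) : ℤ →₀ LPA K U :=
  x.sum fun m a => y.sum fun n b => Finsupp.single n (a * gradedProj U K (m - n) b)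

end Ultragraph

/-- The skew product ultragraph `𝒢 ×₁ ℤ`. -/
def Ultragraph.skewZ {V E : Type} (U : Ultragraph V E) : Ultragraph (V × ℤ) (E × ℤ) where
  s := fun en => (U.s en.1, en.2)
  r := fun en => (fun w => (w, en.2 - 1)) '' U.r en.1
  r_nonempty := fun en => (U.r_nonempty en.1).image _

namespace Ultragraph

variable {V E : Type} (U : Ultragraph V E) (K : Type) [Field K]

/-- Composability of two groupoid elements. -/
def Composable (a b : U.Grpd) : Prop := a.1.2.2 = b.1.1

/-- Convolution product of functions on the groupoid:
`(f * g)(γ) = Σ_{γ = αβ} f(α) g(β)`. -/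
noncomputable def convK (f g : U.Grpd → K) : U.Grpd → K :=
  fun γ => ∑ᶠ q : {q : U.Grpd × U.Grpd // U.Composable q.1 q.2 ∧ compT q.1.1 q.2.1 = γ.1},
    f q.1.1 * g q.1.2

/-- A compact open bisection of the ultragraph groupoid. -/
def IsCOB (W : Set U.Grpd) : Prop :=
  IsCompact W ∧ IsOpen W ∧
    (∀ a ∈ W, ∀ b ∈ W, a.1.2.2 = b.1.2.2 → a = b) ∧
    ∀ a ∈ W, ∀ b ∈ W, a.1.1 = b.1.1 → a = b

/-- The Steinberg algebra `A_K(𝔊_𝒢)` (as a subspace of `K^{𝔊_𝒢}`): the `K`-span of the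
characteristic functions of compact open bisections. -/
def SteinbergSpan : Submodule K (U.Grpd → K) :=
  Submodule.span K {f : U.Grpd → K |
    ∃ W : Set U.Grpd, U.IsCOB W ∧ f = Set.indicator W fun _ => (1 : K)}

/-- The span of characteristic functions of `n`-homogeneous compact open bisections:
the degree-`n` component `A_K(𝔊_𝒢)_n`. -/
def SteinbergComp (n : ℤ) : Submodule K (U.Grpd → K) :=
  Submodule.span K {f : U.Grpd → K |
    ∃ W : Set U.Grpd, U.IsCOB W ∧ W ⊆ {g : U.Grpd | g.1.2.1 = n} ∧
      f = Set.indicator W fun _ => (1 : K)}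

end Ultragraph

namespace Ultragraph

variable {V E : Type} (K : Type) [Field K] (U : Ultragraph V E)

/-- The `K`-vector space `V_A` (`A = r(x)`), with basis `{z ∈ 𝔭 : r(z) = A}`. -/
abbrev ModVx (A : Set V) : Type :=
  {z : List E × Set V // U.IsUPath z ∧ z.2 = A} →₀ K

/-- The prescribed `L_K(𝒢)`-action on the basis of `V_A`, together with compatibility of
the `K`- and `L_K(𝒢)`-scalar multiplications. -/
def VxHyps (A : Set V) [instM : Module (LPA K U) (ModVx K U A)] : Prop :=
  (∀ (k : K) (a : LPA K U) (m : ModVx K U A), (k • a) • m = k • (a • m)) ∧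
  (∀ (B : Set V) (hB : U.IsG0 B) (z : {z : List E × Set V // U.IsUPath z ∧ z.2 = A}),
      ((B ∩ U.srcSet z.1).Nonempty →
        pGen K U B hB • Finsupp.single z (1 : K) = Finsupp.single z (1 : K)) ∧
      (¬ (B ∩ U.srcSet z.1).Nonempty →
        pGen K U B hB • Finsupp.single z (1 : K) = 0)) ∧
  (∀ (e : E) (z : {z : List E × Set V // U.IsUPath z ∧ z.2 = A}),
      ((U.r e ∩ U.srcSet z.1).Nonempty →
        ∀ z' : {z : List E × Set V // U.IsUPath z ∧ z.2 = A}, z'.1 = (e :: z.1.1, z.1.2) →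
          sGen K U e • Finsupp.single z (1 : K) = Finsupp.single z' (1 : K)) ∧
      (¬ (U.r e ∩ U.srcSet z.1).Nonempty →
        sGen K U e • Finsupp.single z (1 : K) = 0)) ∧
  (∀ (e : E) (z : {z : List E × Set V // U.IsUPath z ∧ z.2 = A}),
      (∀ l : List E, z.1.1 = e :: l →
        ∀ z' : {z : List E × Set V // U.IsUPath z ∧ z.2 = A}, z'.1 = (l, z.1.2) →
          stGen K U e • Finsupp.single z (1 : K) = Finsupp.single z' (1 : K)) ∧
      ((∀ l : List E, z.1.1 ≠ e :: l) →
        stGen K U e • Finsupp.single z (1 : K) = 0))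

/-- The `K`-vector space `V_{[p]}`, with basis the tail-equivalence class `[p]`. -/
abbrev ModVp (p : ℕ → E) : Type :=
  {q : ℕ → E // U.IsIPath q ∧ IPEquiv p q} →₀ K

/-- The prescribed `L_K(𝒢)`-action on the basis of `V_{[p]}`, together with compatibility
of the `K`- and `L_K(𝒢)`-scalar multiplications. -/
def VpHyps (p : ℕ → E) [instM : Module (LPA K U) (ModVp K U p)] : Prop :=
  (∀ (k : K) (a : LPA K U) (m : ModVp K U p), (k • a) • m = k • (a • m)) ∧
  (∀ (B : Set V) (hB : U.IsG0 B) (q : {q : ℕ → E // U.IsIPath q ∧ IPEquiv p q}),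
      (U.s (q.1 0) ∈ B →
        pGen K U B hB • Finsupp.single q (1 : K) = Finsupp.single q (1 : K)) ∧
      (U.s (q.1 0) ∉ B →
        pGen K U B hB • Finsupp.single q (1 : K) = 0)) ∧
  (∀ (e : E) (q : {q : ℕ → E // U.IsIPath q ∧ IPEquiv p q}),
      (U.s (q.1 0) ∈ U.r e →
        ∀ q' : {q : ℕ → E // U.IsIPath q ∧ IPEquiv p q}, q'.1 = prependL [e] q.1 →
          sGen K U e • Finsupp.single q (1 : K) = Finsupp.single q' (1 : K)) ∧
      (U.s (q.1 0) ∉ U.r e →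
        sGen K U e • Finsupp.single q (1 : K) = 0)) ∧
  (∀ (e : E) (q : {q : ℕ → E // U.IsIPath q ∧ IPEquiv p q}),
      (q.1 0 = e →
        ∀ q' : {q : ℕ → E // U.IsIPath q ∧ IPEquiv p q}, q'.1 = shiftL 1 q.1 →
          stGen K U e • Finsupp.single q (1 : K) = Finsupp.single q' (1 : K)) ∧
      (q.1 0 ≠ e →
        stGen K U e • Finsupp.single q (1 : K) = 0))

/-- A rational infinite path: tail-equivalent to `c^∞` for some cycle `c`. -/
def IsRationalP (p : ℕ → E) : Prop :=
  ∃ (c : List E) (hc : c ≠ []), U.IsCycle c ∧ IPEquiv p (periodicL c hc)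

/-- The Laurent polynomial ring `K[t,t⁻¹]`. -/
abbrev LaurK : Type := LaurentPolynomial K

/-- The quotient `K[t,t⁻¹]/(f)`. -/
abbrev QuotF (f : LaurK K) : Type := LaurK K ⧸ Ideal.span ({f} : Set (LaurK K))

/-- The prescribed right `K[t,t⁻¹]`-structure on `V_{[p]}` induced by the isotropy
action: for `p ∼ c^∞` with `c` a cycle, `t` acts by shifting by `|c|` (prepending `c`);
together with compatibility with the `K`-structure. -/
def VpLaurHyps (p : ℕ → E) [instF : Module (LaurK K) (ModVp K U p)] : Prop :=
  (∀ (k : K) (m : ModVp K U p), (algebraMap K (LaurK K) k) • m = k • m) ∧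
  (∀ (c : List E) (hc : c ≠ []), U.IsCycle c → IPEquiv p (periodicL c hc) →
    ∀ (q q' : {q : ℕ → E // U.IsIPath q ∧ IPEquiv p q}), q.1 = prependL c q'.1 →
      (LaurentPolynomial.T 1 : LaurK K) • Finsupp.single q' (1 : K) =
        Finsupp.single q (1 : K))

/-- The module `V^f_{[p]} = V_{[p]} ⊗_{K[t,t⁻¹]} K[t,t⁻¹]/(f)`. -/
abbrev ModVf (p : ℕ → E) (f : LaurK K) [instF : Module (LaurK K) (ModVp K U p)] : Type :=
  TensorProduct (LaurK K) (ModVp K U p) (QuotF K f)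

/-- The prescribed `L_K(𝒢)`-action on `V^f_{[p]}`: the action on simple tensors is the
`V_{[p]}`-action on the first factor, and it commutes with the `K[t,t⁻¹]`-action. -/
def VfHyps (p : ℕ → E) (f : LaurK K) [instF : Module (LaurK K) (ModVp K U p)]
    [instL : Module (LPA K U) (ModVf K U p f)] : Prop :=
  (∀ (u : LaurK K) (a : LPA K U) (m : ModVf K U p f), a • u • m = u • a • m) ∧
  (∀ (B : Set V) (hB : U.IsG0 B) (q : {q : ℕ → E // U.IsIPath q ∧ IPEquiv p q})
      (w : QuotF K f),
      (U.s (q.1 0) ∈ B →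
        pGen K U B hB • (Finsupp.single q (1 : K) ⊗ₜ[LaurK K] w) =
          Finsupp.single q (1 : K) ⊗ₜ[LaurK K] w) ∧
      (U.s (q.1 0) ∉ B →
        pGen K U B hB • (Finsupp.single q (1 : K) ⊗ₜ[LaurK K] w) = 0)) ∧
  (∀ (e : E) (q : {q : ℕ → E // U.IsIPath q ∧ IPEquiv p q}) (w : QuotF K f),
      (U.s (q.1 0) ∈ U.r e →
        ∀ q' : {q : ℕ → E // U.IsIPath q ∧ IPEquiv p q}, q'.1 = prependL [e] q.1 →
          sGen K U e • (Finsupp.single q (1 : K) ⊗ₜ[LaurK K] w) =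
            Finsupp.single q' (1 : K) ⊗ₜ[LaurK K] w) ∧
      (U.s (q.1 0) ∉ U.r e →
        sGen K U e • (Finsupp.single q (1 : K) ⊗ₜ[LaurK K] w) = 0)) ∧
  (∀ (e : E) (q : {q : ℕ → E // U.IsIPath q ∧ IPEquiv p q}) (w : QuotF K f),
      (q.1 0 = e →
        ∀ q' : {q : ℕ → E // U.IsIPath q ∧ IPEquiv p q}, q'.1 = shiftL 1 q.1 →
          stGen K U e • (Finsupp.single q (1 : K) ⊗ₜ[LaurK K] w) =
            Finsupp.single q' (1 : K) ⊗ₜ[LaurK K] w) ∧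
      (q.1 0 ≠ e →
        stGen K U e • (Finsupp.single q (1 : K) ⊗ₜ[LaurK K] w) = 0))

end Ultragraph

namespace Ultragraph

variable {V E : Type} (U : Ultragraph V E)

/-- `μ` is eventually periodic: `μ = p·σσσ⋯` for a finite list `p` and a cycle `σ`. -/
def IsEvPeriodic (μ : XType V E) : Prop :=
  ∃ (l c : List E) (hc : c ≠ []), U.IsCycle c ∧ μ = Sum.inr (prependL l (periodicL c hc))

end Ultragraph



open Ultragraph

namespace UGAux

variable {V E : Type}

lemma prependL_lt {l : List E} {p : ℕ → E} {n : ℕ} (h : n < l.length) :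
    prependL l p n = l.get ⟨n, h⟩ := dif_pos h

lemma prependL_ge {l : List E} {p : ℕ → E} {n : ℕ} (h : l.length ≤ n) :
    prependL l p n = p (n - l.length) := dif_neg (by omega)

lemma prependL_nil (p : ℕ → E) : prependL ([] : List E) p = p :=
  funext fun n => by simp [prependL]

lemma prependL_add (l : List E) (p : ℕ → E) (n : ℕ) :
    prependL l p (n + l.length) = p n := by
  rw [prependL_ge (by omega)]
  congr 1
  omega

lemma prependL_append (l₁ l₂ : List E) (p : ℕ → E) :
    prependL (l₁ ++ l₂) p = prependL l₁ (prependL l₂ p) := by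
  funext n
  rcases lt_or_ge n l₁.length with h | h
  · rw [prependL_lt h, prependL_lt (show n < (l₁ ++ l₂).length by simp; omega)]
    exact List.getElem_append_left h
  · rcases lt_or_ge n (l₁.length + l₂.length) with h2 | h2
    · rw [prependL_lt (show n < (l₁ ++ l₂).length by simp; omega),
        prependL_ge h, prependL_lt (show n - l₁.length < l₂.length by omega)]
      exact List.getElem_append_right h
    · rw [prependL_ge (by simp; omega), prependL_ge h,
        prependL_ge (show l₂.length ≤ n - l₁.length by omega)]
      congr 1
      simp
      omega

lemma prependL_cancel {l : List E} {p q : ℕ → E}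
    (h : prependL l p = prependL l q) : p = q := by
  funext n
  have := congrFun h (n + l.length)
  rwa [prependL_add, prependL_add] at this

end UGAux

namespace UGAux2
open UGAux

variable {V E : Type} (U : Ultragraph V E)

lemma singleton_ultraset (v : V) : U.IsUltraset {v} := by
  refine ⟨Ultragraph.IsG0.vertex v, ⟨fun B hB => hB.1, ?_, ?_, ?_⟩, ?_⟩
  · rintro ⟨-, h⟩
    exact h rfl
  · rintro A ⟨hA, hvA⟩ B ⟨hB, hvB⟩
    exact ⟨Ultragraph.IsG0.inter hA hB, Set.subset_inter hvA hvB⟩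
  · rintro A ⟨hA, hvA⟩ B hB hAB
    exact ⟨hB, hvA.trans hAB⟩
  · rintro F ⟨hF0, hFne, hFinter, hFup⟩ hsub
    ext B
    constructor
    · intro hB
      refine ⟨hF0 B hB, ?_⟩
      have hvF : ({v} : Set V) ∈ F := hsub ⟨Ultragraph.IsG0.vertex v, subset_rfl⟩
      have := hFinter B hB _ hvF
      rcases Set.subset_singleton_iff_eq.mp (Set.inter_subset_right (s := B)) with h | h
      · rw [h] at this
        exact absurd this hFne
      · intro w hw
        rw [Set.mem_singleton_iff] at hw
        have hvB : v ∈ B ∩ {v} := by rw [h]; exact rfl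
        rw [hw]
        exact hvB.1
    · exact fun hB => hsub hB

lemma ultraset_singleton {A : Set V} (h : U.IsUltraset A) : ∃ v, A = {v} := by
  have hAne : A.Nonempty := by
    by_contra hne
    rw [Set.not_nonempty_iff_eq_empty] at hne
    subst hne
    exact h.2.1.2.1 ⟨h.1, subset_rfl⟩
  obtain ⟨v, hv⟩ := hAne
  refine ⟨v, ?_⟩
  have hF : U.principalFilter {v} = U.principalFilter A := by
    apply h.2.2
    · exact (singleton_ultraset U v).2.1
    · rintro B ⟨hB, hAB⟩
      exact ⟨hB, Set.singleton_subset_iff.mpr (hAB hv)⟩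
  have : ({v} : Set V) ∈ U.principalFilter A := by
    rw [← hF]
    exact ⟨Ultragraph.IsG0.vertex v, subset_rfl⟩
  exact le_antisymm this.2 (Set.singleton_subset_iff.mpr hv)

lemma xel_inr (hNIE : U.NoInfiniteEmitters) {μ : Ultragraph.XType V E}
    (h : U.IsXEl μ) : ∃ p : ℕ → E, μ = Sum.inr p ∧ U.IsIPath p := by
  cases μ with
  | inl y =>
    exfalso
    obtain ⟨v, hv⟩ := ultraset_singleton U h.2.1
    have hinf := h.2.2
    rw [hv] at hinf
    have : {e : E | U.s e ∈ ({v} : Set V)} = {e : E | U.s e = v} := by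
      simp [Set.mem_singleton_iff]
    rw [Ultragraph.InfEmitterSet, this] at hinf
    exact hinf (hNIE v)
  | inr p => exact ⟨p, rfl, h⟩

end UGAux2

namespace UGAux3
open UGAux UGAux2

variable {V E : Type} (U : Ultragraph V E)

lemma isIPath_shift {p : ℕ → E} (h : U.IsIPath p) (n : ℕ) : U.IsIPath (shiftL n p) := by
  intro k
  have := h (k + n)
  simpa [shiftL, Nat.add_right_comm] using this

lemma isIPath_prepend {l : List E} {q : ℕ → E} (hl : U.IsEdgePath l)
    (hq : U.IsIPath q) (hj : ∀ e, l.getLast? = some e → U.s (q 0) ∈ U.r e) :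
    U.IsIPath (prependL l q) := by
  intro n
  rcases lt_or_ge (n + 1) l.length with h | h
  · rw [prependL_lt h, prependL_lt (by omega)]
    exact List.isChain_iff_getElem.mp hl n (by omega)
  · rcases eq_or_lt_of_le h with h2 | h2
    · have hn : n < l.length := by omega
      rw [prependL_lt hn, prependL_ge h]
      have h0 : n + 1 - l.length = 0 := by omega
      rw [h0]
      apply hj
      have hne : l ≠ [] := by
        intro hh
        rw [hh] at hn
        simp at hn
      have hn' : n = l.length - 1 := by omega
      subst hn'
      rw [List.getLast?_eq_getLast hne, List.getLast_eq_getElem]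
      simp
    · rw [prependL_ge h, prependL_ge (by omega)]
      have := hq (n - l.length)
      have h1 : n + 1 - l.length = n - l.length + 1 := by omega
      rw [h1]
      exact this

lemma prependL_ofFn (p : ℕ → E) (n : ℕ) :
    prependL (List.ofFn fun i : Fin n => p i) (shiftL n p) = p := by
  funext k
  rcases lt_or_ge k n with h | h
  · rw [prependL_lt (by simpa using h)]
    simp
  · rw [prependL_ge (by simpa using h)]
    simp only [shiftL, List.length_ofFn]
    congr 1
    omega

lemma chain'_ofFn {p : ℕ → E} (hp : U.IsIPath p) (n : ℕ) :
    U.IsEdgePath (List.ofFn fun i : Fin n => p i) := by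
  show List.IsChain U.Adj _
  rw [List.isChain_iff_getElem]
  intro i h
  simp only [List.length_ofFn] at h
  simp only [List.getElem_ofFn]
  show U.s (p (i + 1)) ∈ U.r (p i)
  exact hp i

lemma getLast?_ofFn (p : ℕ → E) (n : ℕ) (hn : 0 < n) :
    (List.ofFn fun i : Fin n => p i).getLast? = some (p (n - 1)) := by
  have hne : (List.ofFn fun i : Fin n => p i) ≠ [] := by
    simp only [ne_eq, List.ofFn_eq_nil_iff]
    omega
  rw [List.getLast?_eq_getLast hne, List.getLast_eq_getElem]
  simp

end UGAux3

namespace UGAux4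
open UGAux UGAux2 UGAux3

variable {V E : Type} (U : Ultragraph V E)

lemma prependL_split {l₁ l₂ : List E} {q₁ q₂ : ℕ → E}
    (h : prependL l₁ q₁ = prependL l₂ q₂) (hle : l₁.length ≤ l₂.length) :
    l₂ = l₁ ++ l₂.drop l₁.length ∧ q₁ = prependL (l₂.drop l₁.length) q₂ := by
  have htake : l₂.take l₁.length = l₁ := by
    apply List.ext_get
    · simp
      omega
    · intro i h1 h2
      have hi : i < l₁.length := h2
      have hi2 : i < l₂.length := by omega
      simp only [List.get_eq_getElem, List.getElem_take]
      have e1 : prependL l₁ q₁ i = l₁[i] := prependL_lt hi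
      have e2 : prependL l₂ q₂ i = l₂[i] := prependL_lt hi2
      rw [← e1, ← e2, h]
  have hsplit : l₂ = l₁ ++ l₂.drop l₁.length := by
    conv_lhs => rw [← List.take_append_drop l₁.length l₂]
    rw [htake]
  refine ⟨hsplit, ?_⟩
  apply prependL_cancel (l := l₁)
  rw [← prependL_append, ← hsplit, h]

lemma unit_mem_inr {p : ℕ → E} (hp : U.IsIPath p) :
    U.InGrpd (Sum.inr p, 0, Sum.inr p) := by
  refine ⟨(([] : List E), {U.s (p 0)}), (([] : List E), {U.s (p 0)}), Sum.inr p,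
    ⟨List.isChain_nil, Ultragraph.IsG0.vertex _, by intro e he; simp at he⟩,
    ⟨List.isChain_nil, Ultragraph.IsG0.vertex _, by intro e he; simp at he⟩,
    hp, rfl, rfl, rfl, ?_, ?_, ?_⟩
  · show U.IsXEl (Sum.inr (prependL [] p))
    rw [prependL_nil]
    exact hp
  · show U.IsXEl (Sum.inr (prependL [] p))
    rw [prependL_nil]
    exact hp
  · show _ = (Sum.inr (prependL [] p), _, Sum.inr (prependL ([] : List E) p))
    rw [prependL_nil]
    norm_num

lemma inv_mem {u w : Ultragraph.XType V E} {k : ℤ} (h : U.InGrpd (u, k, w)) :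
    U.InGrpd (w, -k, u) := by
  obtain ⟨x, y, μ, hx, hy, hμ, hset, hcx, hcy, hXx, hXy, heq⟩ := h
  simp only [Prod.mk.injEq] at heq
  obtain ⟨hu, hk, hw⟩ := heq
  exact ⟨y, x, μ, hy, hx, hμ, hset.symm, hcy, hcx, hXy, hXx, by
    simp only [Prod.mk.injEq]
    exact ⟨hw, by omega, hu⟩⟩

lemma exists_deg (h2 : U.GradedCond2) {p : ℕ → E}
    (hp : U.IsIPath p) (m : ℤ) : ∃ v, U.InGrpd (Sum.inr p, m, v) := by
  rcases le_or_gt m 0 with hm | hm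
  · set k : ℕ := (-m).toNat with hk
    obtain ⟨n, hn, ylist, hyne, hychain, hyr, hylen⟩ := h2 k p hp
    have hsp : U.s (p n) ∈ U.r (p (n - 1)) := by
      have := hp (n - 1)
      have hn1 : n - 1 + 1 = n := by omega
      rwa [hn1] at this
    refine ⟨Sum.inr (prependL ylist (shiftL n p)),
      (List.ofFn fun i : Fin n => p i, U.r (p (n - 1))), (ylist, U.r (p (n - 1))),
      Sum.inr (shiftL n p),
      ⟨chain'_ofFn U hp n, Ultragraph.IsG0.range _, ?_⟩,
      ⟨hychain, Ultragraph.IsG0.range _, ?_⟩,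
      isIPath_shift U hp n, rfl, ?_, ?_, ?_, ?_, ?_⟩
    · intro e he
      rw [getLast?_ofFn p n hn] at he
      cases he
      exact subset_rfl
    · intro e he
      have : U.rList ylist = U.r e := by rw [Ultragraph.rList, he]
      rw [← hyr, this]
    · show U.s (shiftL n p 0) ∈ U.r (p (n - 1))
      simpa [shiftL] using hsp
    · show U.s (shiftL n p 0) ∈ U.r (p (n - 1))
      simpa [shiftL] using hsp
    · show U.IsXEl (Sum.inr (prependL _ (shiftL n p)))
      rw [prependL_ofFn]
      exact hp
    · show U.IsXEl (Sum.inr (prependL ylist (shiftL n p)))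
      apply isIPath_prepend U hychain (isIPath_shift U hp n)
      intro e he
      have hre : U.rList ylist = U.r e := by rw [Ultragraph.rList, he]
      show U.s (p (0 + n)) ∈ U.r e
      rw [← hre, hyr]
      simpa using hsp
    · simp only [Prod.mk.injEq]
      refine ⟨by simp only [Ultragraph.concatXel]; rw [prependL_ofFn], ?_, rfl⟩
      simp only [List.length_ofFn]
      omega
  · set k : ℕ := m.toNat with hk
    have hk1 : 1 ≤ k := by omega
    have hsp : U.s (p k) ∈ U.r (p (k - 1)) := by
      have := hp (k - 1)
      have hk2 : k - 1 + 1 = k := by omega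
      rwa [hk2] at this
    refine ⟨Sum.inr (prependL [] (shiftL k p)),
      (List.ofFn fun i : Fin k => p i, U.r (p (k - 1))), (([] : List E), U.r (p (k - 1))),
      Sum.inr (shiftL k p),
      ⟨chain'_ofFn U hp k, Ultragraph.IsG0.range _, ?_⟩,
      ⟨List.isChain_nil, Ultragraph.IsG0.range _, by intro e he; simp at he⟩,
      isIPath_shift U hp k, rfl, ?_, ?_, ?_, ?_, ?_⟩
    · intro e he
      rw [getLast?_ofFn p k hk1] at he
      cases he
      exact subset_rfl
    · show U.s (shiftL k p 0) ∈ U.r (p (k - 1))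
      simpa [shiftL] using hsp
    · show U.s (shiftL k p 0) ∈ U.r (p (k - 1))
      simpa [shiftL] using hsp
    · show U.IsXEl (Sum.inr (prependL _ (shiftL k p)))
      rw [prependL_ofFn]
      exact hp
    · show U.IsXEl (Sum.inr (prependL [] (shiftL k p)))
      rw [prependL_nil]
      exact isIPath_shift U hp k
    · simp only [Prod.mk.injEq]
      refine ⟨by simp only [Ultragraph.concatXel]; rw [prependL_ofFn], ?_, rfl⟩
      simp only [List.length_ofFn, List.length_nil]
      omega

end UGAux4

namespace UGAux5
open UGAux UGAux2 UGAux3 UGAux4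

variable {V E : Type} (U : Ultragraph V E)

lemma comp_mem (hNIE : U.NoInfiniteEmitters) {a b : Ultragraph.Trip V E}
    (ha : U.InGrpd a) (hb : U.InGrpd b) (hab : a.2.2 = b.1) :
    U.InGrpd (compT a b) := by
  obtain ⟨x₁, y₁, μ₁, hx1, hy1, hμ1, hs1, hcx1, hcy1, hXx1, hXy1, rfl⟩ := ha
  obtain ⟨x₂, y₂, μ₂, hx2, hy2, hμ2, hs2, hcx2, hcy2, hXx2, hXy2, rfl⟩ := hb
  obtain ⟨q₁, rfl, hq1⟩ := xel_inr U hNIE hμ1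
  obtain ⟨q₂, rfl, hq2⟩ := xel_inr U hNIE hμ2
  have hmid : prependL y₁.1 q₁ = prependL x₂.1 q₂ := by
    have h' : (Sum.inr (prependL y₁.1 q₁) : Ultragraph.XType V E) =
        Sum.inr (prependL x₂.1 q₂) := hab
    injection h'
  have hcx1' : U.s (q₁ 0) ∈ x₁.2 := hcx1
  have hcy1' : U.s (q₁ 0) ∈ y₁.2 := hcy1
  have hcx2' : U.s (q₂ 0) ∈ x₂.2 := hcx2
  have hcy2' : U.s (q₂ 0) ∈ y₂.2 := hcy2
  rcases lt_trichotomy y₁.1.length x₂.1.length with hL | hL | hL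
  · -- y₁ strictly shorter
    obtain ⟨hsplit, hq⟩ := prependL_split hmid (le_of_lt hL)
    set t : List E := x₂.1.drop y₁.1.length with htdef
    have ht0 : 0 < t.length := by
      rw [htdef, List.length_drop]
      omega
    have ht : t ≠ [] := by
      rw [← List.length_pos_iff]
      exact ht0
    have hq10 : q₁ 0 = t.get ⟨0, ht0⟩ := by
      rw [hq]
      exact prependL_lt ht0
    have hhead : t.head? = some (q₁ 0) := by
      rw [List.head?_eq_head ht, List.head_eq_getElem]
      rw [hq10]
      simp
    have hchaint : U.IsEdgePath t := by
      have := hx2.1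
      rw [hsplit] at this
      exact (List.isChain_append.mp this).2.1
    refine ⟨(x₁.1 ++ t, x₂.2), (y₂.1, x₂.2), Sum.inr q₂, ?_, ?_, hq2, rfl, ?_, ?_, ?_, ?_, ?_⟩
    · refine ⟨?_, hx2.2.1, ?_⟩
      · refine List.isChain_append.mpr ⟨hx1.1, hchaint, ?_⟩
        intro e he f hf
        rw [hhead] at hf
        cases hf
        show U.s (q₁ 0) ∈ U.r e
        exact hx1.2.2 e (Option.mem_def.mp he) hcx1'
      · intro e he
        rw [List.getLast?_append_of_ne_nil _ ht] at he
        apply hx2.2.2 e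
        rw [hsplit, List.getLast?_append_of_ne_nil _ ht]
        exact he
    · refine ⟨hy2.1, hx2.2.1, ?_⟩
      intro e he
      rw [hs2]
      exact hy2.2.2 e he
    · exact hcx2'
    · show U.s (q₂ 0) ∈ x₂.2
      exact hcx2'
    · show U.IsXEl (Sum.inr (prependL (x₁.1 ++ t) q₂))
      rw [prependL_append, ← hq]
      exact hXx1
    · exact hXy2
    · simp only [compT, Prod.mk.injEq, Ultragraph.concatXel]
      refine ⟨by rw [prependL_append, ← hq], ?_, trivial⟩
      have hlt : t.length = x₂.1.length - y₁.1.length := by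
        rw [htdef, List.length_drop]
      rw [List.length_append, hlt]
      push_cast
      omega
  · -- equal lengths
    obtain ⟨hsplit, hq⟩ := prependL_split hmid (le_of_eq hL)
    have hdnil : x₂.1.drop y₁.1.length = [] := by
      apply List.drop_eq_nil_of_le
      omega
    rw [hdnil, prependL_nil] at hq
    refine ⟨(x₁.1, x₁.2 ∩ x₂.2), (y₂.1, x₁.2 ∩ x₂.2), Sum.inr q₂, ?_, ?_, hq2, rfl,
      ?_, ?_, ?_, ?_, ?_⟩
    · exact ⟨hx1.1, Ultragraph.IsG0.inter hx1.2.1 hx2.2.1,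
        fun e he => Set.inter_subset_left.trans (hx1.2.2 e he)⟩
    · refine ⟨hy2.1, Ultragraph.IsG0.inter hx1.2.1 hx2.2.1, ?_⟩
      intro e he
      refine Set.inter_subset_right.trans ?_
      rw [hs2]
      exact hy2.2.2 e he
    · show U.s (q₂ 0) ∈ x₁.2 ∩ x₂.2
      rw [← hq]
      exact ⟨hcx1', hq ▸ hcx2'⟩
    · show U.s (q₂ 0) ∈ x₁.2 ∩ x₂.2
      rw [← hq]
      exact ⟨hcx1', hq ▸ hcx2'⟩
    · show U.IsXEl (Sum.inr (prependL x₁.1 q₂))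
      rw [← hq]
      exact hXx1
    · exact hXy2
    · simp only [compT, Prod.mk.injEq, Ultragraph.concatXel]
      refine ⟨by rw [hq], ?_, trivial⟩
      omega
  · -- x₂ strictly shorter
    obtain ⟨hsplit, hq⟩ := prependL_split hmid.symm (le_of_lt hL)
    set t : List E := y₁.1.drop x₂.1.length with htdef
    have ht0 : 0 < t.length := by
      rw [htdef, List.length_drop]
      omega
    have ht : t ≠ [] := by
      rw [← List.length_pos_iff]
      exact ht0
    have hq20 : q₂ 0 = t.get ⟨0, ht0⟩ := by
      rw [hq]
      exact prependL_lt ht0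
    have hhead : t.head? = some (q₂ 0) := by
      rw [List.head?_eq_head ht, List.head_eq_getElem]
      rw [hq20]
      simp
    have hchaint : U.IsEdgePath t := by
      have := hy1.1
      rw [hsplit] at this
      exact (List.isChain_append.mp this).2.1
    refine ⟨(x₁.1, x₁.2), (y₂.1 ++ t, x₁.2), Sum.inr q₁, ?_, ?_, hq1, rfl, ?_, ?_, ?_, ?_, ?_⟩
    · exact ⟨hx1.1, hx1.2.1, fun e he => hx1.2.2 e he⟩
    · refine ⟨?_, hx1.2.1, ?_⟩
      · refine List.isChain_append.mpr ⟨hy2.1, hchaint, ?_⟩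
        intro e he f hf
        rw [hhead] at hf
        cases hf
        show U.s (q₂ 0) ∈ U.r e
        exact hy2.2.2 e (Option.mem_def.mp he) hcy2'
      · intro e he
        rw [List.getLast?_append_of_ne_nil _ ht] at he
        rw [hs1]
        apply hy1.2.2 e
        rw [hsplit, List.getLast?_append_of_ne_nil _ ht]
        exact he
    · exact hcx1'
    · show U.s (q₁ 0) ∈ x₁.2
      exact hcx1'
    · exact hXx1
    · show U.IsXEl (Sum.inr (prependL (y₂.1 ++ t) q₁))
      rw [prependL_append, ← hq]
      exact hXy2
    · simp only [compT, Prod.mk.injEq, Ultragraph.concatXel]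
      refine ⟨trivial, ?_, by rw [prependL_append, ← hq]⟩
      have hlt : t.length = y₁.1.length - x₂.1.length := by
        rw [htdef, List.length_drop]
      rw [List.length_append, hlt]
      push_cast
      omega

end UGAux5

namespace UGAux6
open UGAux UGAux2 UGAux3 UGAux4 UGAux5

variable {V E : Type} (U : Ultragraph V E)

lemma unit_mem_v {v : V} (hv : {e : E | U.s e = v}.Infinite) :
    U.InGrpd (Sum.inl (([] : List E), ({v} : Set V)), 0,
      Sum.inl (([] : List E), ({v} : Set V))) := by
  have hup : U.IsUPath (([] : List E), ({v} : Set V)) :=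
    ⟨List.isChain_nil, Ultragraph.IsG0.vertex v, by intro e he; simp at he⟩
  have hinf : U.InfEmitterSet ({v} : Set V) := by
    have : {e : E | U.s e ∈ ({v} : Set V)} = {e : E | U.s e = v} := by
      simp [Set.mem_singleton_iff]
    rw [Ultragraph.InfEmitterSet, this]
    exact hv
  have hxel : U.IsXEl (Sum.inl (([] : List E), ({v} : Set V))) :=
    ⟨hup, singleton_ultraset U v, hinf⟩
  have hconcat : Ultragraph.concatXel (([] : List E), ({v} : Set V))
      (Sum.inl (([] : List E), ({v} : Set V))) =
      Sum.inl (([] : List E), ({v} : Set V)) := by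
    simp [Ultragraph.concatXel, concatU]
  have hcc : U.CanConcatX (([] : List E), ({v} : Set V))
      (Sum.inl (([] : List E), ({v} : Set V))) := ⟨v, rfl, rfl⟩
  refine ⟨(([] : List E), ({v} : Set V)), (([] : List E), ({v} : Set V)),
    Sum.inl (([] : List E), ({v} : Set V)), hup, hup, hxel, rfl, hcc, hcc, ?_, ?_, ?_⟩
  · rw [hconcat]; exact hxel
  · rw [hconcat]; exact hxel
  · rw [hconcat]; norm_num

lemma fwd_no_inf
    (h : ∀ m n : ℤ, Ultragraph.setMulG (U.gradeSet m) (U.gradeSet n) = U.gradeSet (m + n)) :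
    U.NoInfiniteEmitters := by
  intro v
  by_contra hv
  rw [← Set.not_infinite, not_not] at hv
  have h' := h 1 (-1)
  norm_num at h'
  have hunit : (Sum.inl (([] : List E), ({v} : Set V)), (0 : ℤ),
      Sum.inl (([] : List E), ({v} : Set V))) ∈ U.gradeSet 0 :=
    ⟨unit_mem_v U hv, rfl⟩
  rw [← h'] at hunit
  obtain ⟨a, ⟨haG, had⟩, b, hb, hab, heqc⟩ := hunit
  obtain ⟨x, y, μ, hx, hy, hμ, hs, hcx, hcy, hXx, hXy, rfl⟩ := haG
  have h1 : (Sum.inl (([] : List E), ({v} : Set V)) : Ultragraph.XType V E) =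
      Ultragraph.concatXel x μ := congrArg Prod.fst heqc
  have hd : (x.1.length : ℤ) - y.1.length = 1 := had
  cases μ with
  | inr p => simp [Ultragraph.concatXel] at h1
  | inl z =>
    have h2 : ([] : List E) = x.1 ++ z.1 := by
      have := congrArg (fun w : Ultragraph.XType V E =>
        match w with | Sum.inl u => u.1 | Sum.inr _ => ([] : List E)) h1
      simpa [Ultragraph.concatXel, concatU] using this
    have hx1 : x.1 = [] := (List.append_eq_nil_iff.mp h2.symm).1
    rw [hx1] at hd
    simp at hd
    omega

lemma fwd_cond2
    (h : ∀ m n : ℤ, Ultragraph.setMulG (U.gradeSet m) (U.gradeSet n) = U.gradeSet (m + n)) :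
    U.GradedCond2 := by
  intro k p hp
  have h' := h (-(k : ℤ)) k
  norm_num at h'
  have hunit : ((Sum.inr p : Ultragraph.XType V E), (0 : ℤ), (Sum.inr p : Ultragraph.XType V E))
      ∈ U.gradeSet 0 := ⟨unit_mem_inr U hp, rfl⟩
  rw [← h'] at hunit
  obtain ⟨a, ha, b, ⟨hbG, hbd⟩, hab, heqc⟩ := hunit
  obtain ⟨x, y, μ, hx, hy, hμ, hs, hcx, hcy, hXx, hXy, rfl⟩ := hbG
  have hd : (x.1.length : ℤ) - y.1.length = k := hbd
  have h22 : (Sum.inr p : Ultragraph.XType V E) = Ultragraph.concatXel y μ :=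
    congrArg (fun w => w.2.2) heqc
  cases μ with
  | inl z => simp [Ultragraph.concatXel] at h22
  | inr q =>
    have hq : p = prependL y.1 q := by
      have : (Sum.inr p : Ultragraph.XType V E) = Sum.inr (prependL y.1 q) := h22
      injection this
    have hcx' : U.s (q 0) ∈ x.2 := hcx
    refine ⟨y.1.length + 1, by omega, x.1 ++ [q 0], by simp, ?_, ?_, ?_⟩
    · refine List.isChain_append.mpr ⟨hx.1, List.isChain_singleton _, ?_⟩
      intro e he f hf
      simp at hf
      subst hf
      show U.s (q 0) ∈ U.r e
      exact hx.2.2 e (Option.mem_def.mp he) hcx'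
    · have hlast : (x.1 ++ [q 0]).getLast? = some (q 0) := by
        rw [List.getLast?_append_of_ne_nil _ (by simp)]
        rfl
      have hr : U.rList (x.1 ++ [q 0]) = U.r (q 0) := by
        rw [Ultragraph.rList, hlast]
      have hpn : p y.1.length = q 0 := by
        rw [hq, prependL_ge (le_refl _)]
        simp
      rw [hr]
      have hn1 : y.1.length + 1 - 1 = y.1.length := by omega
      rw [hn1, hpn]
    · simp only [List.length_append, List.length_singleton]
      push_cast
      omega

lemma bwd (hNIE : U.NoInfiniteEmitters) (h2 : U.GradedCond2) (m n : ℤ) :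
    Ultragraph.setMulG (U.gradeSet m) (U.gradeSet n) = U.gradeSet (m + n) := by
  ext c
  constructor
  · rintro ⟨a, ⟨haG, had⟩, b, ⟨hbG, hbd⟩, hab, rfl⟩
    refine ⟨comp_mem U hNIE haG hbG hab, ?_⟩
    show a.2.1 + b.2.1 = m + n
    rw [had, hbd]
  · rintro ⟨hcG, hcd⟩
    have hcG' := hcG
    obtain ⟨x, y, μ, hx, hy, hμ, hs, hcx, hcy, hXx, hXy, hceq⟩ := hcG'
    obtain ⟨q, rfl, hq⟩ := xel_inr U hNIE hμ
    set P := prependL x.1 q with hPdef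
    have hP : U.IsIPath P := hXx
    obtain ⟨v, hv⟩ := exists_deg U h2 hP m
    have hinv : U.InGrpd (v, -m, (Sum.inr P : Ultragraph.XType V E)) := inv_mem U hv
    have hc1 : c.1 = (Sum.inr P : Ultragraph.XType V E) := congrArg Prod.fst hceq
    have hb : U.InGrpd (compT (v, -m, (Sum.inr P : Ultragraph.XType V E)) c) :=
      comp_mem U hNIE hinv hcG hc1.symm
    refine ⟨((Sum.inr P : Ultragraph.XType V E), m, v), ⟨hv, rfl⟩,
      (v, -m + c.2.1, c.2.2), ⟨hb, ?_⟩, rfl, ?_⟩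
    · show -m + c.2.1 = n
      rw [hcd]
      ring
    · show c = ((Sum.inr P : Ultragraph.XType V E), m + (-m + c.2.1), c.2.2)
      rw [← hc1]
      have hmm : m + (-m + c.2.1) = c.2.1 := by ring
      rw [hmm]

end UGAux6


open Ultragraph in
/-- For an ultragraph `𝒢` without sinks, the ultragraph groupoid `𝔊_𝒢`
is strongly ℤ-graded iff `𝒢` has no infinite emitters and condition (2) holds. -/
theorem ultragraph_groupoid_strongly_graded_iff
    (V E : Type) [Countable V] [Countable E] (U : Ultragraph V E)
    (hns : U.HasNoSinks) :
    (∀ m n : ℤ, setMulG (U.gradeSet m) (U.gradeSet n) = U.gradeSet (m + n)) ↔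
      (U.NoInfiniteEmitters ∧ U.GradedCond2) := by
  constructor
  · intro h
    exact ⟨UGAux6.fwd_no_inf U h, UGAux6.fwd_cond2 U h⟩
  · rintro ⟨h1, h2⟩
    exact UGAux6.bwd U h1 h2
end
end

section
/- Let K be a field and 𝒢 an ultragraph without sinks. In the ultragraph Leavitt path algebra L_K(𝒢), every monomial of the form s_α p_A s*_β with α, β ∈ 𝒢*, A ∈ 𝒢⁰, and r(α) ∩ r(β) ∩ A ≠ ∅ is nonzero. -/
set_option synthInstance.maxHeartbeats 1000000
set_option maxHeartbeats 1000000

noncomputable section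
open Classical TensorProduct

/-! ### Auxiliary development for the nonzeroness of monomials -/

section NonzeroAux

open Ultragraph

variable {V E : Type}

lemma ugPrependL_lt {l : List E} {n : ℕ} (p : ℕ → E) (h : n < l.length) :
    prependL l p n = l.get ⟨n, h⟩ := dif_pos h

lemma ugPrependL_ge {l : List E} {n : ℕ} (p : ℕ → E) (h : l.length ≤ n) :
    prependL l p n = p (n - l.length) := dif_neg (by omega)

lemma ugPrependL_nil (p : ℕ → E) : prependL ([] : List E) p = p := by
  funext n; rw [ugPrependL_ge p (by simp)]; simp

lemma ugPrependL_cons_zero (e : E) (l : List E) (p : ℕ → E) :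
    prependL (e :: l) p 0 = e := by
  rw [ugPrependL_lt p (by simp)]; rfl

lemma ugPrependL_single_succ (e : E) (p : ℕ → E) (n : ℕ) :
    prependL [e] p (n + 1) = p n := by
  rw [ugPrependL_ge p (by simp)]; simp

lemma ugPrependL_cons (e : E) (l : List E) (p : ℕ → E) :
    prependL (e :: l) p = prependL [e] (prependL l p) := by
  funext n
  cases n with
  | zero => rw [ugPrependL_cons_zero, ugPrependL_cons_zero]
  | succ n =>
    rw [ugPrependL_single_succ]
    by_cases h : n < l.length
    · rw [ugPrependL_lt p (by simpa using Nat.succ_lt_succ h), ugPrependL_lt p h]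
      rfl
    · rw [ugPrependL_ge p (by simp; omega), ugPrependL_ge p (by omega)]
      congr 1
      simp only [List.length_cons]
      omega

lemma ugShiftL_one (p : ℕ → E) (n : ℕ) : shiftL 1 p n = p (n + 1) := rfl

lemma ugShift_prependL (e : E) (p : ℕ → E) : shiftL 1 (prependL [e] p) = p := by
  funext n; rw [ugShiftL_one, ugPrependL_single_succ]

lemma ugPrepend_shift {q : ℕ → E} {e : E} (h : q 0 = e) :
    prependL [e] (shiftL 1 q) = q := by
  funext n
  cases n with
  | zero => rw [ugPrependL_cons_zero]; exact h.symm
  | succ n => rw [ugPrependL_single_succ]; rfl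

variable {U : Ultragraph V E}

lemma ugIpath_shift {q : ℕ → E} (hq : U.IsIPath q) : U.IsIPath (shiftL 1 q) :=
  fun n => hq (n + 1)

lemma ugIpath_cons {e : E} {q : ℕ → E} (h : U.s (q 0) ∈ U.r e) (hq : U.IsIPath q) :
    U.IsIPath (prependL [e] q) := by
  intro n
  cases n with
  | zero =>
    rw [ugPrependL_single_succ, ugPrependL_cons_zero]
    exact h
  | succ n =>
    rw [ugPrependL_single_succ, ugPrependL_single_succ]
    exact hq n

lemma ugIpath_prepend {l : List E} (hl : List.Chain' U.Adj l) {q : ℕ → E}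
    (hq : U.IsIPath q) (hlast : ∀ e, l.getLast? = some e → U.s (q 0) ∈ U.r e) :
    U.IsIPath (prependL l q) := by
  induction l with
  | nil => rw [ugPrependL_nil]; exact hq
  | cons e l ih =>
    rw [ugPrependL_cons]
    cases l with
    | nil =>
      rw [ugPrependL_nil]
      exact ugIpath_cons (hlast e rfl) hq
    | cons f l' =>
      obtain ⟨hef, htl⟩ := List.isChain_cons_cons.mp hl
      have hq' : U.IsIPath (prependL (f :: l') q) :=
        ih htl fun e' he' => hlast e' (by rw [List.getLast?_cons_cons]; exact he')
      apply ugIpath_cons _ hq'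
      rw [ugPrependL_cons_zero]
      exact hef

/-- An infinite path starting at any given vertex (no sinks). -/
lemma ugExists_ipath (hns : U.HasNoSinks) (v : V) :
    ∃ q : ℕ → E, U.IsIPath q ∧ U.s (q 0) = v := by
  choose f hf using hns
  choose g hg using U.r_nonempty
  refine ⟨fun n => f (Nat.rec v (fun _ w => g (f w)) n), fun n => ?_, hf v⟩
  rw [hf]
  exact hg _

variable (U) (K : Type) [Field K]

/-- Basis index type: the infinite paths of `U`. -/
abbrev UGIP := {q : ℕ → E // U.IsIPath q}

/-- The representation space: finitely supported functions on infinite paths. -/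
abbrev UGMX := UGIP U →₀ K

/-- The operator attached to each generator. -/
noncomputable def ugGenOp : LGen U → Module.End K (UGMX U K) := fun g =>
  match g with
  | .pr A => Finsupp.lift (UGMX U K) K (UGIP U) fun q =>
      if U.s (q.1 0) ∈ A.1 then Finsupp.single q 1 else 0
  | .ed e => Finsupp.lift (UGMX U K) K (UGIP U) fun q =>
      if h : U.s (q.1 0) ∈ U.r e then
        Finsupp.single ⟨prependL [e] q.1, ugIpath_cons h q.2⟩ 1 else 0
  | .st e => Finsupp.lift (UGMX U K) K (UGIP U) fun q =>
      if q.1 0 = e then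
        Finsupp.single ⟨shiftL 1 q.1, ugIpath_shift q.2⟩ 1 else 0

variable {U} {K}

lemma ugLiftval (f : UGIP U → UGMX U K) (q : UGIP U) (b : K) :
    (Finsupp.lift (UGMX U K) K (UGIP U) f) (Finsupp.single q b) = b • f q := by
  rw [Finsupp.lift_apply, Finsupp.sum_single_index (by simp)]

lemma ugGenOp_pr_pos (A : {A : Set V // U.IsG0 A}) (q : UGIP U) (b : K)
    (h : U.s (q.1 0) ∈ A.1) :
    ugGenOp U K (.pr A) (Finsupp.single q b) = Finsupp.single q b := by
  show (Finsupp.lift (UGMX U K) K (UGIP U) fun q =>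
      if U.s (q.1 0) ∈ A.1 then Finsupp.single q 1 else 0) (Finsupp.single q b) = _
  rw [ugLiftval, if_pos h, Finsupp.smul_single, smul_eq_mul, mul_one]

lemma ugGenOp_pr_neg (A : {A : Set V // U.IsG0 A}) (q : UGIP U) (b : K)
    (h : U.s (q.1 0) ∉ A.1) :
    ugGenOp U K (.pr A) (Finsupp.single q b) = 0 := by
  show (Finsupp.lift (UGMX U K) K (UGIP U) fun q =>
      if U.s (q.1 0) ∈ A.1 then Finsupp.single q 1 else 0) (Finsupp.single q b) = _
  rw [ugLiftval, if_neg h, smul_zero]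

lemma ugGenOp_ed_pos (e : E) (q : UGIP U) (b : K) (h : U.s (q.1 0) ∈ U.r e) :
    ugGenOp U K (.ed e) (Finsupp.single q b) =
      Finsupp.single ⟨prependL [e] q.1, ugIpath_cons h q.2⟩ b := by
  show (Finsupp.lift (UGMX U K) K (UGIP U) fun q =>
      if h : U.s (q.1 0) ∈ U.r e then
        Finsupp.single ⟨prependL [e] q.1, ugIpath_cons h q.2⟩ 1 else 0)
      (Finsupp.single q b) = _
  rw [ugLiftval, dif_pos h, Finsupp.smul_single, smul_eq_mul, mul_one]

lemma ugGenOp_ed_neg (e : E) (q : UGIP U) (b : K) (h : U.s (q.1 0) ∉ U.r e) :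
    ugGenOp U K (.ed e) (Finsupp.single q b) = 0 := by
  show (Finsupp.lift (UGMX U K) K (UGIP U) fun q =>
      if h : U.s (q.1 0) ∈ U.r e then
        Finsupp.single ⟨prependL [e] q.1, ugIpath_cons h q.2⟩ 1 else 0)
      (Finsupp.single q b) = _
  rw [ugLiftval, dif_neg h, smul_zero]

lemma ugGenOp_st_pos (e : E) (q : UGIP U) (b : K) (h : q.1 0 = e) :
    ugGenOp U K (.st e) (Finsupp.single q b) =
      Finsupp.single ⟨shiftL 1 q.1, ugIpath_shift q.2⟩ b := by
  show (Finsupp.lift (UGMX U K) K (UGIP U) fun q =>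
      if q.1 0 = e then
        Finsupp.single ⟨shiftL 1 q.1, ugIpath_shift q.2⟩ 1 else 0)
      (Finsupp.single q b) = _
  rw [ugLiftval, if_pos h, Finsupp.smul_single, smul_eq_mul, mul_one]

lemma ugGenOp_st_neg (e : E) (q : UGIP U) (b : K) (h : ¬ q.1 0 = e) :
    ugGenOp U K (.st e) (Finsupp.single q b) = 0 := by
  show (Finsupp.lift (UGMX U K) K (UGIP U) fun q =>
      if q.1 0 = e then
        Finsupp.single ⟨shiftL 1 q.1, ugIpath_shift q.2⟩ 1 else 0)
      (Finsupp.single q b) = _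
  rw [ugLiftval, if_neg h, smul_zero]

lemma ugSingle_eq_of_val {x y : UGIP U} (h : x.1 = y.1) (b : K) :
    Finsupp.single x b = Finsupp.single y b :=
  congrArg (Finsupp.single · b) (Subtype.ext h)

variable (U) (K)

/-- All defining relations are preserved by the operators. -/
lemma ugRel_preserved : ∀ ⦃a b : FreeAlgebra K (LGen U)⦄, LRel K U a b →
    FreeAlgebra.lift K (ugGenOp U K) a = FreeAlgebra.lift K (ugGenOp U K) b := by
  intro a b hrel
  induction hrel with
  | pEmpty h =>
    refine Finsupp.lhom_ext fun q b => ?_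
    rw [map_zero, FreeAlgebra.lift_ι_apply, LinearMap.zero_apply,
      ugGenOp_pr_neg ⟨∅, h⟩ q b (Set.notMem_empty _)]
  | pInter A B =>
    refine Finsupp.lhom_ext fun q b => ?_
    rw [map_mul, FreeAlgebra.lift_ι_apply, FreeAlgebra.lift_ι_apply,
      FreeAlgebra.lift_ι_apply, Module.End.mul_apply]
    by_cases hB : U.s (q.1 0) ∈ B.1 <;> by_cases hA : U.s (q.1 0) ∈ A.1
    · rw [ugGenOp_pr_pos B q b hB, ugGenOp_pr_pos A q b hA,
        ugGenOp_pr_pos ⟨A.1 ∩ B.1, IsG0.inter A.2 B.2⟩ q b (Set.mem_inter hA hB)]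
    · rw [ugGenOp_pr_pos B q b hB, ugGenOp_pr_neg A q b hA,
        ugGenOp_pr_neg ⟨A.1 ∩ B.1, IsG0.inter A.2 B.2⟩ q b (by simp [hA])]
    · rw [ugGenOp_pr_neg B q b hB, map_zero,
        ugGenOp_pr_neg ⟨A.1 ∩ B.1, IsG0.inter A.2 B.2⟩ q b (by simp [hB])]
    · rw [ugGenOp_pr_neg B q b hB, map_zero,
        ugGenOp_pr_neg ⟨A.1 ∩ B.1, IsG0.inter A.2 B.2⟩ q b (by simp [hB])]
  | pUnion A B =>
    refine Finsupp.lhom_ext fun q b => ?_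
    rw [map_sub, map_add, FreeAlgebra.lift_ι_apply, FreeAlgebra.lift_ι_apply,
      FreeAlgebra.lift_ι_apply, FreeAlgebra.lift_ι_apply,
      LinearMap.sub_apply, LinearMap.add_apply]
    by_cases hA : U.s (q.1 0) ∈ A.1 <;> by_cases hB : U.s (q.1 0) ∈ B.1
    · rw [ugGenOp_pr_pos A q b hA, ugGenOp_pr_pos B q b hB,
        ugGenOp_pr_pos ⟨A.1 ∩ B.1, IsG0.inter A.2 B.2⟩ q b (Set.mem_inter hA hB),
        ugGenOp_pr_pos ⟨A.1 ∪ B.1, IsG0.union A.2 B.2⟩ q b (Set.mem_union_left _ hA)]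
      abel
    · rw [ugGenOp_pr_pos A q b hA, ugGenOp_pr_neg B q b hB,
        ugGenOp_pr_neg ⟨A.1 ∩ B.1, IsG0.inter A.2 B.2⟩ q b (by simp [hB]),
        ugGenOp_pr_pos ⟨A.1 ∪ B.1, IsG0.union A.2 B.2⟩ q b (Set.mem_union_left _ hA)]
      abel
    · rw [ugGenOp_pr_neg A q b hA, ugGenOp_pr_pos B q b hB,
        ugGenOp_pr_neg ⟨A.1 ∩ B.1, IsG0.inter A.2 B.2⟩ q b (by simp [hA]),
        ugGenOp_pr_pos ⟨A.1 ∪ B.1, IsG0.union A.2 B.2⟩ q b (Set.mem_union_right _ hB)]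
      abel
    · rw [ugGenOp_pr_neg A q b hA, ugGenOp_pr_neg B q b hB,
        ugGenOp_pr_neg ⟨A.1 ∩ B.1, IsG0.inter A.2 B.2⟩ q b (by simp [hA, hB]),
        ugGenOp_pr_neg ⟨A.1 ∪ B.1, IsG0.union A.2 B.2⟩ q b (by simp [hA, hB])]
      abel
  | sLeft e =>
    refine Finsupp.lhom_ext fun q b => ?_
    rw [map_mul, FreeAlgebra.lift_ι_apply, FreeAlgebra.lift_ι_apply,
      Module.End.mul_apply]
    by_cases h : U.s (q.1 0) ∈ U.r e
    · rw [ugGenOp_ed_pos e q b h,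
        ugGenOp_pr_pos ⟨{U.s e}, IsG0.vertex (U.s e)⟩ _ b
          (show U.s (prependL [e] q.1 0) ∈ ({U.s e} : Set V) by
            rw [ugPrependL_cons_zero]; exact rfl)]
    · rw [ugGenOp_ed_neg e q b h, map_zero]
  | sRight e =>
    refine Finsupp.lhom_ext fun q b => ?_
    rw [map_mul, FreeAlgebra.lift_ι_apply, FreeAlgebra.lift_ι_apply,
      Module.End.mul_apply]
    by_cases h : U.s (q.1 0) ∈ U.r e
    · rw [ugGenOp_pr_pos ⟨U.r e, IsG0.range e⟩ q b h]
    · rw [ugGenOp_pr_neg ⟨U.r e, IsG0.range e⟩ q b h, map_zero,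
        ugGenOp_ed_neg e q b h]
  | stLeft e =>
    refine Finsupp.lhom_ext fun q b => ?_
    rw [map_mul, FreeAlgebra.lift_ι_apply, FreeAlgebra.lift_ι_apply,
      Module.End.mul_apply]
    by_cases h : q.1 0 = e
    · have hmem : U.s (shiftL 1 q.1 0) ∈ U.r e := by
        have h2 := q.2 0
        rw [h] at h2
        exact h2
      rw [ugGenOp_st_pos e q b h,
        ugGenOp_pr_pos ⟨U.r e, IsG0.range e⟩ _ b hmem]
    · rw [ugGenOp_st_neg e q b h, map_zero]
  | stRight e =>
    refine Finsupp.lhom_ext fun q b => ?_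
    rw [map_mul, FreeAlgebra.lift_ι_apply, FreeAlgebra.lift_ι_apply,
      Module.End.mul_apply]
    by_cases hm : U.s (q.1 0) ∈ ({U.s e} : Set V)
    · rw [ugGenOp_pr_pos ⟨{U.s e}, IsG0.vertex (U.s e)⟩ q b hm]
    · have hne : ¬ q.1 0 = e := fun h => hm (by rw [h]; rfl)
      rw [ugGenOp_pr_neg ⟨{U.s e}, IsG0.vertex (U.s e)⟩ q b hm, map_zero,
        ugGenOp_st_neg e q b hne]
  | ortho e f h =>
    refine Finsupp.lhom_ext fun q b => ?_
    rw [map_mul, map_zero, FreeAlgebra.lift_ι_apply, FreeAlgebra.lift_ι_apply,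
      Module.End.mul_apply, LinearMap.zero_apply]
    by_cases hf : U.s (q.1 0) ∈ U.r f
    · rw [ugGenOp_ed_pos f q b hf,
        ugGenOp_st_neg e _ b
          (show ¬ prependL [f] q.1 0 = e by
            rw [ugPrependL_cons_zero]; exact fun hfe => h hfe.symm)]
    · rw [ugGenOp_ed_neg f q b hf, map_zero]
  | ck1 e =>
    refine Finsupp.lhom_ext fun q b => ?_
    rw [map_mul, FreeAlgebra.lift_ι_apply, FreeAlgebra.lift_ι_apply,
      FreeAlgebra.lift_ι_apply, Module.End.mul_apply]
    by_cases h : U.s (q.1 0) ∈ U.r e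
    · rw [ugGenOp_ed_pos e q b h,
        ugGenOp_st_pos e _ b (ugPrependL_cons_zero e [] q.1),
        ugGenOp_pr_pos ⟨U.r e, IsG0.range e⟩ q b h]
      exact ugSingle_eq_of_val (ugShift_prependL e q.1) b
    · rw [ugGenOp_ed_neg e q b h, map_zero, ugGenOp_pr_neg _ q b h]
  | ck2 v h =>
    refine Finsupp.lhom_ext fun q b => ?_
    rw [FreeAlgebra.lift_ι_apply, map_sum, LinearMap.sum_apply]
    have key : ∀ e : E,
        (FreeAlgebra.lift K (ugGenOp U K))
            (FreeAlgebra.ι K (LGen.ed e) * FreeAlgebra.ι K (LGen.st e))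
            (Finsupp.single q b) =
          if q.1 0 = e then Finsupp.single q b else 0 := by
      intro e
      rw [map_mul, FreeAlgebra.lift_ι_apply, FreeAlgebra.lift_ι_apply,
        Module.End.mul_apply]
      by_cases he : q.1 0 = e
      · have hmem : U.s (shiftL 1 q.1 0) ∈ U.r e := by
          have h2 := q.2 0
          rw [he] at h2
          exact h2
        rw [ugGenOp_st_pos e q b he, ugGenOp_ed_pos e _ b hmem, if_pos he]
        exact ugSingle_eq_of_val (ugPrepend_shift he) b
      · rw [ugGenOp_st_neg e q b he, map_zero, if_neg he]
    rw [Finset.sum_congr rfl fun e _ => key e]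
    rw [Finset.sum_ite_eq h.2.toFinset (q.1 0) fun _ => Finsupp.single q b]
    by_cases hv : U.s (q.1 0) = v
    · rw [ugGenOp_pr_pos ⟨{v}, IsG0.vertex v⟩ q b (by simpa using hv),
        if_pos (by rw [Set.Finite.mem_toFinset]; exact hv)]
    · rw [ugGenOp_pr_neg ⟨{v}, IsG0.vertex v⟩ q b (by simpa using hv),
        if_neg (by rw [Set.Finite.mem_toFinset]; exact hv)]

/-- The representation of `L_K(𝒢)` on `UGMX`. -/
noncomputable def ugRep : LPA K U →ₐ[K] Module.End K (UGMX U K) :=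
  RingQuot.liftAlgHom K ⟨FreeAlgebra.lift K (ugGenOp U K), ugRel_preserved U K⟩

variable {U} {K}

lemma ugRep_pGen (A : Set V) (hA : U.IsG0 A) :
    ugRep U K (pGen K U A hA) = ugGenOp U K (.pr ⟨A, hA⟩) := by
  rw [pGen, ugRep, RingQuot.liftAlgHom_mkAlgHom_apply, FreeAlgebra.lift_ι_apply]

lemma ugRep_sGen (e : E) : ugRep U K (sGen K U e) = ugGenOp U K (.ed e) := by
  rw [sGen, ugRep, RingQuot.liftAlgHom_mkAlgHom_apply, FreeAlgebra.lift_ι_apply]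

lemma ugRep_stGen (e : E) : ugRep U K (stGen K U e) = ugGenOp U K (.st e) := by
  rw [stGen, ugRep, RingQuot.liftAlgHom_mkAlgHom_apply, FreeAlgebra.lift_ι_apply]

lemma ugSPath_nil : sPath K U ([] : List E) = 1 := by simp [sPath]

lemma ugSPath_cons (e : E) (l : List E) :
    sPath K U (e :: l) = sGen K U e * sPath K U l := by simp [sPath]

lemma ugStPath_nil : stPath K U ([] : List E) = 1 := by simp [stPath]

lemma ugStPath_cons (e : E) (l : List E) :
    stPath K U (e :: l) = stPath K U l * stGen K U e := by simp [stPath]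

lemma ugRep_sPath (l : List E) (hl : List.Chain' U.Adj l) (q : UGIP U)
    (hlast : ∀ e, l.getLast? = some e → U.s (q.1 0) ∈ U.r e) :
    ugRep U K (sPath K U l) (Finsupp.single q 1) =
      Finsupp.single ⟨prependL l q.1, ugIpath_prepend hl q.2 hlast⟩ 1 := by
  induction l with
  | nil =>
    rw [ugSPath_nil, map_one, Module.End.one_apply]
    exact (ugSingle_eq_of_val (ugPrependL_nil q.1) 1).symm
  | cons e l ih =>
    have hl' : List.Chain' U.Adj l := hl.tail
    have hlast' : ∀ f, l.getLast? = some f → U.s (q.1 0) ∈ U.r f := by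
      intro f hf
      apply hlast f
      cases l with
      | nil => simp at hf
      | cons g l' => rw [List.getLast?_cons_cons]; exact hf
    rw [ugSPath_cons, map_mul, Module.End.mul_apply, ih hl' hlast']
    have hcond : U.s (prependL l q.1 0) ∈ U.r e := by
      cases l with
      | nil => rw [ugPrependL_nil]; exact hlast e rfl
      | cons f l' =>
        rw [ugPrependL_cons_zero]
        exact (List.isChain_cons_cons.mp hl).1
    rw [ugRep_sGen, ugGenOp_ed_pos e _ 1 hcond]
    exact ugSingle_eq_of_val (ugPrependL_cons e l q.1).symm 1

lemma ugRep_stPath (l : List E) (q : UGIP U) :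
    ∀ h : U.IsIPath (prependL l q.1),
      ugRep U K (stPath K U l) (Finsupp.single ⟨prependL l q.1, h⟩ 1) =
        Finsupp.single q 1 := by
  induction l with
  | nil =>
    intro h
    rw [ugStPath_nil, map_one, Module.End.one_apply]
    exact ugSingle_eq_of_val (ugPrependL_nil q.1) 1
  | cons e l ih =>
    intro h
    rw [ugStPath_cons, map_mul, Module.End.mul_apply, ugRep_stGen,
      ugGenOp_st_pos e _ 1 (ugPrependL_cons_zero e l q.1)]
    have hval : shiftL 1 (prependL (e :: l) q.1) = prependL l q.1 := by
      rw [ugPrependL_cons, ugShift_prependL]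
    have hp : U.IsIPath (prependL l q.1) := by
      rw [← hval]; exact ugIpath_shift h
    rw [ugSingle_eq_of_val (y := ⟨prependL l q.1, hp⟩) hval 1]
    exact ih hp

lemma ugRep_stFMono_exists (β : Set V ⊕ List E) (hβ : U.IsFPath β) (q0 : UGIP U)
    (hv : U.s (q0.1 0) ∈ U.rF β) :
    ∃ x : UGIP U,
      ugRep U K (stFMono K U β hβ) (Finsupp.single x 1) = Finsupp.single q0 1 := by
  cases β with
  | inl B =>
    refine ⟨q0, ?_⟩
    have hβ' : U.IsG0 B := hβ
    show ugRep U K (pGen K U B hβ') _ = _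
    rw [ugRep_pGen, ugGenOp_pr_pos ⟨B, hβ'⟩ q0 1 hv]
  | inr m =>
    have hcomp : ∀ e, m.getLast? = some e → U.s (q0.1 0) ∈ U.r e := by
      intro e he
      have hv' : U.s (q0.1 0) ∈ U.rList m := hv
      rw [Ultragraph.rList, he] at hv'
      exact hv'
    have hip := ugIpath_prepend hβ.2 q0.2 hcomp
    exact ⟨⟨prependL m q0.1, hip⟩, ugRep_stPath m q0 hip⟩

lemma ugRep_sFMono_exists (α : Set V ⊕ List E) (hα : U.IsFPath α) (q0 : UGIP U)
    (hv : U.s (q0.1 0) ∈ U.rF α) :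
    ∃ y : UGIP U,
      ugRep U K (sFMono K U α hα) (Finsupp.single q0 1) = Finsupp.single y 1 := by
  cases α with
  | inl A' =>
    refine ⟨q0, ?_⟩
    have hα' : U.IsG0 A' := hα
    show ugRep U K (pGen K U A' hα') _ = _
    rw [ugRep_pGen, ugGenOp_pr_pos ⟨A', hα'⟩ q0 1 hv]
  | inr l =>
    have hcomp : ∀ e, l.getLast? = some e → U.s (q0.1 0) ∈ U.r e := by
      intro e he
      have hv' : U.s (q0.1 0) ∈ U.rList l := hv
      rw [Ultragraph.rList, he] at hv'
      exact hv'
    refine ⟨⟨prependL l q0.1, ugIpath_prepend hα.2 q0.2 hcomp⟩, ?_⟩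
    exact ugRep_sPath l hα.2 q0 hcomp

end NonzeroAux


open Ultragraph in
/-- In `L_K(𝒢)` (`𝒢` without sinks), every monomial `s_α p_A s*_β` with
`α, β ∈ 𝒢*`, `A ∈ 𝒢⁰` and `r(α) ∩ r(β) ∩ A ≠ ∅` is nonzero. -/
theorem ultragraph_leavitt_monomials_nonzero
    (K : Type) [Field K] (V E : Type) [Countable V] [Countable E]
    (U : Ultragraph V E) (hns : U.HasNoSinks) :
    ∀ (α : Set V ⊕ List E) (hα : U.IsFPath α) (β : Set V ⊕ List E) (hβ : U.IsFPath β)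
      (A : Set V) (hA : U.IsG0 A),
      (U.rF α ∩ U.rF β ∩ A).Nonempty →
      sFMono K U α hα * pGen K U A hA * stFMono K U β hβ ≠ 0 := by
  intro α hα β hβ A hA hne
  obtain ⟨v, hv⟩ := hne
  obtain ⟨⟨hvα, hvβ⟩, hvA⟩ := hv
  obtain ⟨p, hp, hpv⟩ := ugExists_ipath hns v
  set q0 : UGIP U := ⟨p, hp⟩ with hq0def
  have hq0 : U.s (q0.1 0) = v := hpv
  obtain ⟨x, hx⟩ := ugRep_stFMono_exists (K := K) β hβ q0 (by rw [hq0]; exact hvβ)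
  obtain ⟨y, hy⟩ := ugRep_sFMono_exists (K := K) α hα q0 (by rw [hq0]; exact hvα)
  intro h0
  have hc := congrArg (fun a => ugRep U K a (Finsupp.single x (1 : K))) h0
  simp only [map_mul, map_zero, Module.End.mul_apply, LinearMap.zero_apply] at hc
  rw [hx, ugRep_pGen, ugGenOp_pr_pos ⟨A, hA⟩ q0 1 (by rw [hq0]; exact hvA), hy] at hc
  exact one_ne_zero (Finsupp.single_eq_zero.mp hc)
end
end

section
/- Let K be a field, 𝒢 an ultragraph without sinks, and x, y ∈ Y_∞. Let V_x be the K-vector space with basis {z ∈ 𝔭 : r(z) = r(x)}, made into a left L_K(𝒢)-module by the K-linear extension of: p_A·z = z if s(z) ∈ A and 0 otherwise; s_e·z = (e e₁⋯eₙ, r(x)) if z = (e₁⋯eₙ, r(x)) and s(z) ∈ r(e), and 0 otherwise; s*_e·z = (e₂⋯eₙ, r(x)) if z = (e₁⋯eₙ, r(x)) with e = e₁, and 0 otherwise; and s*_e·r(x) = 0. Then: (1) V_x is a simple left L_K(𝒢)-module; (2) V_x ≅ V_y as left L_K(𝒢)-modules if and only if r(x) = r(y), which happens precisely when V_x = V_y;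 (3) End_{L_K(𝒢)}(V_x) ≅ K. -/
set_option synthInstance.maxHeartbeats 1000000
set_option maxHeartbeats 1000000

noncomputable section
open Classical TensorProduct

namespace UltraProof
open Ultragraph Finsupp

variable {V E : Type} {K : Type} [Field K] {U : Ultragraph V E}

theorem ultra_nonempty {A : Set V} (hA : U.IsUltraset A) : A.Nonempty := by
  rcases Set.eq_empty_or_nonempty A with rfl | h
  · exact absurd ⟨hA.1, subset_rfl⟩ hA.2.1.2.1
  · exact h

theorem ultra_subset {A B : Set V} (hA : U.IsUltraset A) (hB : U.IsG0 B)
    (hne : (A ∩ B).Nonempty) : A ⊆ B := by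
  have hF : U.IsFilterG0 {C | U.IsG0 C ∧ A ∩ B ⊆ C} := by
    refine ⟨fun C hC => hC.1, ?_, ?_, ?_⟩
    · intro hmem
      exact hne.ne_empty (Set.subset_empty_iff.mp hmem.2)
    · intro C hC D hD
      exact ⟨Ultragraph.IsG0.inter hC.1 hD.1, Set.subset_inter hC.2 hD.2⟩
    · intro C hC D hDG0 hCD
      exact ⟨hDG0, hC.2.trans hCD⟩
  have hsub : U.principalFilter A ⊆ {C | U.IsG0 C ∧ A ∩ B ⊆ C} :=
    fun C hC => ⟨hC.1, Set.inter_subset_left.trans hC.2⟩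
  have heq := hA.2.2 _ hF hsub
  have hBmem : B ∈ U.principalFilter A := by
    rw [← heq]; exact ⟨hB, Set.inter_subset_right⟩
  exact hBmem.2

/-- The basis of `V_A`. -/
abbrev Bas (U : Ultragraph V E) (A : Set V) : Type :=
  {z : List E × Set V // U.IsUPath z ∧ z.2 = A}

theorem getLast?_cons_ne_nil {l : List E} (e : E) (hl : l ≠ []) :
    (e :: l).getLast? = l.getLast? := by
  cases l with
  | nil => exact absurd rfl hl
  | cons f t => exact List.getLast?_cons_cons

theorem srcSet_nil (A : Set V) : U.srcSet (([] : List E), A) = A := rfl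

theorem srcSet_cons (e : E) (l : List E) (A : Set V) :
    U.srcSet (e :: l, A) = {U.s e} := rfl

/-- The length-zero ultrapath `A`. -/
def z0 (U : Ultragraph V E) {A : Set V} (hA : U.IsUltraset A) : Bas U A :=
  ⟨(([] : List E), A), ⟨List.isChain_nil, hA.1, fun _ he => by simp at he⟩, rfl⟩

theorem upath_fst {A : Set V} (z : Bas U A) : U.IsUPath (z.1.1, A) := by
  obtain ⟨⟨l, B⟩, hu, hB⟩ := z
  subst hB
  exact hu

section WithModule

variable {A : Set V} [inst : Module (LPA K U) (ModVx K U A)]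

theorem central_smul (h : VxHyps K U A) (c : K) (m : ModVx K U A) :
    (c • (1 : LPA K U)) • m = c • m := by rw [h.1, one_smul]

theorem smul_comm_K (h : VxHyps K U A) (c : K) (a : LPA K U) (m : ModVx K U A) :
    a • (c • m) = c • (a • m) := by
  rw [← central_smul h c m, ← mul_smul, mul_smul_comm, mul_one, h.1]

theorem single_eq_smul_one (z : Bas U A) (c : K) :
    (Finsupp.single z c : ModVx K U A) = c • Finsupp.single z 1 := by
  rw [Finsupp.smul_single, smul_eq_mul, mul_one]

theorem pGen_single_pos (h : VxHyps K U A) {B : Set V} (hB : U.IsG0 B) (z : Bas U A)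
    (c : K) (hne : (B ∩ U.srcSet z.1).Nonempty) :
    pGen K U B hB • (Finsupp.single z c : ModVx K U A) = Finsupp.single z c := by
  rw [single_eq_smul_one, smul_comm_K h, (h.2.1 B hB z).1 hne]

theorem pGen_single_neg (h : VxHyps K U A) {B : Set V} (hB : U.IsG0 B) (z : Bas U A)
    (c : K) (hne : ¬ (B ∩ U.srcSet z.1).Nonempty) :
    pGen K U B hB • (Finsupp.single z c : ModVx K U A) = 0 := by
  rw [single_eq_smul_one, smul_comm_K h, (h.2.1 B hB z).2 hne, smul_zero]

/-- Extending a basis element by an edge. -/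
def consB (hA : U.IsUltraset A) (e : E) (z : Bas U A)
    (hne : (U.r e ∩ U.srcSet z.1).Nonempty) : Bas U A := by
  refine ⟨(e :: z.1.1, A), ⟨?_, hA.1, ?_⟩, rfl⟩
  · rcases hl : z.1.1 with _ | ⟨f, t⟩
    · exact List.isChain_singleton e
    · refine List.isChain_cons_cons.mpr ⟨?_, hl ▸ z.2.1.1⟩
      have hsrc : U.srcSet z.1 = {U.s f} := by
        unfold Ultragraph.srcSet; rw [hl]; exact rfl
      rw [hsrc] at hne
      obtain ⟨v, hv1, hv2⟩ := hne
      rw [Set.mem_singleton_iff] at hv2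
      subst hv2
      exact hv1
  · intro f hf
    rcases hl : z.1.1 with _ | ⟨g, t⟩
    · rw [hl] at hf
      simp only [List.getLast?_singleton, Option.some.injEq] at hf
      subst hf
      have hsrc : U.srcSet z.1 = A := by
        unfold Ultragraph.srcSet; rw [hl]; exact z.2.2
      rw [hsrc, Set.inter_comm] at hne
      exact ultra_subset hA (Ultragraph.IsG0.range e) hne
    · rw [hl, List.getLast?_cons_cons] at hf
      have := z.2.1.2.2 f (by rw [hl]; exact hf)
      rwa [z.2.2] at this

/-- Removing the first edge of a basis element. -/
def tailB (hA : U.IsUltraset A) (z : Bas U A) (e : E) (l : List E)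
    (hz : z.1.1 = e :: l) : Bas U A := by
  refine ⟨(l, A), ⟨?_, hA.1, ?_⟩, rfl⟩
  · have hc := z.2.1.1
    rw [hz] at hc
    exact hc.tail
  · intro f hf
    have hlne : l ≠ [] := by rintro rfl; simp at hf
    have hlast : z.1.1.getLast? = some f := by
      rw [hz, getLast?_cons_ne_nil e hlne]; exact hf
    have := z.2.1.2.2 f hlast
    rwa [z.2.2] at this

theorem sGen_single_pos (hA : U.IsUltraset A) (h : VxHyps K U A) (e : E) (z : Bas U A)
    (c : K) (hne : (U.r e ∩ U.srcSet z.1).Nonempty) :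
    sGen K U e • (Finsupp.single z c : ModVx K U A) =
      Finsupp.single (consB hA e z hne) c := by
  have h1 := (h.2.2.1 e z).1 hne (consB hA e z hne)
    (by show (e :: z.1.1, A) = (e :: z.1.1, z.1.2); rw [z.2.2])
  rw [single_eq_smul_one, smul_comm_K h, h1, ← single_eq_smul_one]

theorem sGen_single_neg (h : VxHyps K U A) (e : E) (z : Bas U A) (c : K)
    (hne : ¬ (U.r e ∩ U.srcSet z.1).Nonempty) :
    sGen K U e • (Finsupp.single z c : ModVx K U A) = 0 := by
  rw [single_eq_smul_one, smul_comm_K h, (h.2.2.1 e z).2 hne, smul_zero]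

theorem stGen_single_pos (hA : U.IsUltraset A) (h : VxHyps K U A) (e : E) (l : List E)
    (z : Bas U A) (hz : z.1.1 = e :: l) (c : K) :
    stGen K U e • (Finsupp.single z c : ModVx K U A) =
      Finsupp.single (tailB hA z e l hz) c := by
  have h1 := (h.2.2.2 e z).1 l hz (tailB hA z e l hz)
    (by show (l, A) = (l, z.1.2); rw [z.2.2])
  rw [single_eq_smul_one, smul_comm_K h, h1, ← single_eq_smul_one]

theorem stGen_single_neg (h : VxHyps K U A) (e : E) (z : Bas U A)
    (hz : ∀ l, z.1.1 ≠ e :: l) (c : K) :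
    stGen K U e • (Finsupp.single z c : ModVx K U A) = 0 := by
  rw [single_eq_smul_one, smul_comm_K h, (h.2.2.2 e z).2 hz, smul_zero]

theorem sPath_nil : sPath K U ([] : List E) = 1 := rfl

theorem sPath_cons (e : E) (l : List E) :
    sPath K U (e :: l) = sGen K U e * sPath K U l := by
  simp [Ultragraph.sPath]

theorem stPath_nil : stPath K U ([] : List E) = 1 := rfl

theorem stPath_cons (e : E) (l : List E) :
    stPath K U (e :: l) = stPath K U l * stGen K U e := by
  simp [Ultragraph.stPath]

theorem sPath_single (hA : U.IsUltraset A) (h : VxHyps K U A) (c : K) :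
    ∀ (l : List E) (hl : U.IsUPath (l, A)),
      sPath K U l • (Finsupp.single (z0 U hA) c : ModVx K U A) =
        Finsupp.single ⟨(l, A), hl, rfl⟩ c := by
  intro l
  induction l with
  | nil =>
    intro hl
    rw [sPath_nil, one_smul]
    rfl
  | cons e t ih =>
    intro hl
    have hchain : List.Chain' U.Adj (e :: t) := hl.1
    have ht : U.IsUPath (t, A) := by
      refine ⟨(List.isChain_cons.mp hchain).2, hA.1, fun f hf => ?_⟩
      have hlne : t ≠ [] := by rintro rfl; simp at hf
      exact hl.2.2 f (by rw [show ((e :: t, A) : List E × Set V).1.getLast? =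
        t.getLast? from getLast?_cons_ne_nil e hlne]; exact hf)
    have hne : (U.r e ∩ U.srcSet ((⟨(t, A), ht, rfl⟩ : Bas U A)).1).Nonempty := by
      cases t with
      | nil =>
        rw [srcSet_nil]
        have hsub : A ⊆ U.r e := hl.2.2 e rfl
        obtain ⟨v, hv⟩ := ultra_nonempty hA
        exact ⟨v, hsub hv, hv⟩
      | cons f t' =>
        rw [srcSet_cons]
        exact ⟨U.s f, (List.isChain_cons_cons.mp hchain).1, rfl⟩
    rw [sPath_cons, mul_smul, ih ht, sGen_single_pos hA h e _ c hne]
    rfl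

theorem stPath_prefix (hA : U.IsUltraset A) (h : VxHyps K U A) (c : K) :
    ∀ (l : List E) (z z' : Bas U A), z.1.1 = l ++ z'.1.1 →
      stPath K U l • (Finsupp.single z c : ModVx K U A) = Finsupp.single z' c := by
  intro l
  induction l with
  | nil =>
    intro z z' hz
    rw [stPath_nil, one_smul]
    congr 1
    exact Subtype.ext (Prod.ext (by simpa using hz) (z.2.2.trans z'.2.2.symm))
  | cons e t ih =>
    intro z z' hz
    have hz' : z.1.1 = e :: (t ++ z'.1.1) := hz
    rw [stPath_cons, mul_smul, stGen_single_pos hA h e (t ++ z'.1.1) z hz' c]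
    exact ih _ z' rfl

theorem stPath_not_prefix (hA : U.IsUltraset A) (h : VxHyps K U A) (c : K) :
    ∀ (l : List E) (z : Bas U A), (∀ l', z.1.1 ≠ l ++ l') →
      stPath K U l • (Finsupp.single z c : ModVx K U A) = 0 := by
  intro l
  induction l with
  | nil => intro z hnp; exact absurd rfl (hnp z.1.1)
  | cons e t ih =>
    intro z hnp
    rw [stPath_cons, mul_smul]
    by_cases hc : ∃ l₀, z.1.1 = e :: l₀
    · obtain ⟨l₀, hl₀⟩ := hc
      rw [stGen_single_pos hA h e l₀ z hl₀ c]
      refine ih _ fun l' hl' => hnp l' ?_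
      have hll : l₀ = t ++ l' := hl'
      rw [hl₀, hll]
      rfl
    · rw [stGen_single_neg h e z (fun l₀ hl₀ => hc ⟨l₀, hl₀⟩) c, smul_zero]

theorem extract (hA : U.IsUltraset A) (h : VxHyps K U A) (m : ModVx K U A)
    (hm : m ≠ 0) :
    ∃ (c : K) (a : LPA K U), c ≠ 0 ∧ a • m = Finsupp.single (z0 U hA) c := by
  obtain ⟨zm, hzm, hmax⟩ := Finset.exists_max_image m.support (fun z => z.1.1.length)
    (Finsupp.support_nonempty_iff.mpr hm)
  refine ⟨m zm, stPath K U zm.1.1, Finsupp.mem_support_iff.mp hzm, ?_⟩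
  have hsum : stPath K U zm.1.1 • m =
      ∑ z ∈ m.support, stPath K U zm.1.1 • (Finsupp.single z (m z) : ModVx K U A) := by
    conv_lhs => rw [← Finsupp.sum_single m]
    rw [Finsupp.sum, Finset.smul_sum]
  rw [hsum, Finset.sum_eq_single_of_mem zm hzm ?_]
  · exact stPath_prefix hA h (m zm) zm.1.1 zm (z0 U hA) (by simp [z0])
  · intro z hz hne
    refine stPath_not_prefix hA h (m z) zm.1.1 z fun l' hl' => hne ?_
    have hlen := hmax z hz
    rw [hl', List.length_append] at hlen
    have hl0 : l' = [] := by
      have : l'.length = 0 := by omega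
      exact List.length_eq_zero_iff.mp this
    rw [hl0, List.append_nil] at hl'
    exact Subtype.ext (Prod.ext hl' (z.2.2.trans zm.2.2.symm))

theorem eq_single_z0 (hA : U.IsUltraset A) (h : VxHyps K U A) (m : ModVx K U A)
    (hm : ∀ e, stGen K U e • m = 0) :
    m = Finsupp.single (z0 U hA) (m (z0 U hA)) := by
  ext w
  by_cases hw : w = z0 U hA
  · subst hw; simp
  · rw [Finsupp.single_eq_of_ne' (Ne.symm hw)]
    have hwl : w.1.1 ≠ [] := fun h0 => hw (Subtype.ext (Prod.ext h0 w.2.2))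
    obtain ⟨e, l, hel⟩ := List.exists_cons_of_ne_nil hwl
    have key : (stGen K U e • m) (tailB hA w e l hel) = m w := by
      conv_lhs => rw [← Finsupp.sum_single m]
      rw [Finsupp.sum, Finset.smul_sum, Finsupp.finset_sum_apply]
      rw [Finset.sum_eq_single w ?_ ?_]
      · rw [stGen_single_pos hA h e l w hel (m w)]
        simp
      · intro z hz hzw
        by_cases hcase : ∃ l₀, z.1.1 = e :: l₀
        · obtain ⟨l₀, hl₀⟩ := hcase
          rw [stGen_single_pos hA h e l₀ z hl₀ (m z)]
          refine Finsupp.single_eq_of_ne' fun hEq => hzw ?_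
          have hll : l₀ = l := congrArg (fun (b : Bas U A) => b.1.1) hEq
          exact Subtype.ext (Prod.ext (by rw [hl₀, hll, ← hel]) (z.2.2.trans w.2.2.symm))
        · rw [stGen_single_neg h e z (fun l₀ h₀ => hcase ⟨l₀, h₀⟩) (m z)]
          simp
      · intro hmem
        rw [Finsupp.notMem_support_iff.mp hmem]
        simp
    rw [hm e] at key
    simpa using key.symm

theorem single_mem (hA : U.IsUltraset A) (h : VxHyps K U A)
    (N : Submodule (LPA K U) (ModVx K U A))
    (hN : (Finsupp.single (z0 U hA) 1 : ModVx K U A) ∈ N) (z : Bas U A) (c : K) :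
    (Finsupp.single z c : ModVx K U A) ∈ N := by
  have hup := upath_fst z
  have hzz : (⟨(z.1.1, A), hup, rfl⟩ : Bas U A) = z :=
    Subtype.ext (Prod.ext rfl z.2.2.symm)
  have hmem := N.smul_mem ((c • (1 : LPA K U)) * sPath K U z.1.1) hN
  rwa [mul_smul, sPath_single hA h 1 z.1.1 hup, central_smul h, hzz,
    ← single_eq_smul_one] at hmem

theorem simpleVx (hA : U.IsUltraset A) (h : VxHyps K U A) :
    IsSimpleModule (LPA K U) (ModVx K U A) := by
  haveI hnt : Nontrivial (ModVx K U A) :=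
    nontrivial_of_ne (Finsupp.single (z0 U hA) 1) 0
      (fun h0 => one_ne_zero (Finsupp.single_eq_zero.mp h0))
  refine (isSimpleModule_iff ..).mpr ⟨fun N => ?_⟩
  rcases eq_or_ne N ⊥ with hbot | hbot
  · exact Or.inl hbot
  · right
    obtain ⟨m, hmN, hm0⟩ := Submodule.ne_bot_iff N |>.mp hbot
    obtain ⟨c, a, hc, hsm⟩ := extract hA h m hm0
    have h1 : (Finsupp.single (z0 U hA) c : ModVx K U A) ∈ N := hsm ▸ N.smul_mem a hmN
    have h2 : (Finsupp.single (z0 U hA) 1 : ModVx K U A) ∈ N := by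
      have := N.smul_mem (c⁻¹ • (1 : LPA K U)) h1
      rwa [central_smul h, Finsupp.smul_single, smul_eq_mul, inv_mul_cancel₀ hc] at this
    have hall : ∀ m' : ModVx K U A, m' ∈ N := by
      intro m'
      induction m' using Finsupp.induction with
      | zero => exact N.zero_mem
      | single_add z c' f _ _ ih => exact N.add_mem (single_mem hA h N h2 z c') ih
    exact eq_top_iff.mpr fun m' _ => hall m'

theorem hom_scalar (hA : U.IsUltraset A) (h : VxHyps K U A)
    (f : ModVx K U A →ₗ[LPA K U] ModVx K U A) :
    ∃! k : K, ∀ m : ModVx K U A, f m = k • m := by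
  have hstz : ∀ e, stGen K U e • f (Finsupp.single (z0 U hA) 1) = 0 := by
    intro e
    rw [← map_smul, stGen_single_neg h e (z0 U hA) (fun l hl => List.cons_ne_nil _ _ hl.symm) 1,
      map_zero]
  set c : K := f (Finsupp.single (z0 U hA) 1) (z0 U hA) with hcdef
  have hf0 : f (Finsupp.single (z0 U hA) 1) = Finsupp.single (z0 U hA) c :=
    eq_single_z0 hA h _ hstz
  have hsingle : ∀ (z : Bas U A) (k : K),
      f (Finsupp.single z k) = c • Finsupp.single z k := by
    intro z k
    have hup := upath_fst z
    have hzz : (⟨(z.1.1, A), hup, rfl⟩ : Bas U A) = z :=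
      Subtype.ext (Prod.ext rfl z.2.2.symm)
    have hrep : (Finsupp.single z k : ModVx K U A) =
        ((k • (1 : LPA K U)) * sPath K U z.1.1) • Finsupp.single (z0 U hA) 1 := by
      rw [mul_smul, sPath_single hA h 1 _ hup, central_smul h, hzz, ← single_eq_smul_one]
    have hLHS : f (Finsupp.single z k) = Finsupp.single z (k * c) := by
      rw [hrep, map_smul, hf0, mul_smul, sPath_single hA h c _ hup, central_smul h, hzz,
        Finsupp.smul_single, smul_eq_mul]
    rw [hLHS, Finsupp.smul_single, smul_eq_mul, mul_comm]
  have key : ∀ m : ModVx K U A, f m = c • m := by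
    intro m
    induction m using Finsupp.induction with
    | zero => simp
    | single_add z k g _ _ ih => rw [map_add, hsingle, ih, smul_add]
  refine ⟨c, key, fun k' hk' => ?_⟩
  have heq := (hk' (Finsupp.single (z0 U hA) 1)).symm.trans
    (key (Finsupp.single (z0 U hA) 1))
  have := congrArg (fun g : ModVx K U A => g (z0 U hA)) heq
  simpa using this

end WithModule

theorem eq_of_equiv {A B : Set V} (hA : U.IsUltraset A) (hB : U.IsUltraset B)
    [iA : Module (LPA K U) (ModVx K U A)] [iB : Module (LPA K U) (ModVx K U B)]
    (h1 : VxHyps K U A) (h2 : VxHyps K U B)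
    (g : ModVx K U A ≃ₗ[LPA K U] ModVx K U B) : A = B := by
  have hw0 : g (Finsupp.single (z0 U hA) 1) ≠ 0 := by
    intro h0
    exact one_ne_zero (Finsupp.single_eq_zero.mp (g.map_eq_zero_iff.mp h0))
  have hst : ∀ e, stGen K U e • g (Finsupp.single (z0 U hA) 1) = 0 := fun e => by
    rw [← map_smul, stGen_single_neg h1 e (z0 U hA) (fun l hl => List.cons_ne_nil _ _ hl.symm) 1,
      map_zero]
  have hrep := eq_single_z0 hB h2 (g (Finsupp.single (z0 U hA) 1)) hst
  set c := (g (Finsupp.single (z0 U hA) 1)) (z0 U hB) with hcdef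
  have hc : c ≠ 0 := by
    intro h0
    apply hw0
    rw [hrep, h0, Finsupp.single_zero]
  have hp : pGen K U A hA.1 • g (Finsupp.single (z0 U hA) 1) =
      g (Finsupp.single (z0 U hA) 1) := by
    rw [← map_smul, pGen_single_pos h1 hA.1 (z0 U hA) 1 ?_]
    show (A ∩ A).Nonempty
    simpa [Set.inter_self] using ultra_nonempty hA
  have hAB : (A ∩ B).Nonempty := by
    by_contra hemp
    rw [hrep, pGen_single_neg h2 hA.1 (z0 U hB) c hemp] at hp
    exact hc (Finsupp.single_eq_zero.mp hp.symm)
  exact subset_antisymm (ultra_subset hA hB.1 hAB)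
    (ultra_subset hB hA.1 (by rwa [Set.inter_comm] at hAB))

/-- The scalar action of a given module structure. -/
def aSmul {A : Set V} (i : Module (LPA K U) (ModVx K U A)) (a : LPA K U)
    (m : ModVx K U A) : ModVx K U A := letI := i; a • m

theorem aSmul_zero {A : Set V} (i : Module (LPA K U) (ModVx K U A)) (a : LPA K U) :
    aSmul i a 0 = 0 := by
  letI := i
  exact smul_zero a

theorem aSmul_add {A : Set V} (i : Module (LPA K U) (ModVx K U A)) (a : LPA K U)
    (m n : ModVx K U A) : aSmul i a (m + n) = aSmul i a m + aSmul i a n := by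
  letI := i
  exact smul_add a m n

theorem aSmul_mul {A : Set V} (i : Module (LPA K U) (ModVx K U A)) (x y : LPA K U)
    (m : ModVx K U A) : aSmul i (x * y) m = aSmul i x (aSmul i y m) := by
  letI := i
  exact mul_smul x y m

theorem aSmul_addL {A : Set V} (i : Module (LPA K U) (ModVx K U A)) (x y : LPA K U)
    (m : ModVx K U A) : aSmul i (x + y) m = aSmul i x m + aSmul i y m := by
  letI := i
  exact add_smul x y m

theorem algebraMap_smul' {A : Set V} [inst : Module (LPA K U) (ModVx K U A)]
    (h : VxHyps K U A) (r : K) (m : ModVx K U A) :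
    (algebraMap K (LPA K U) r) • m = r • m := by
  rw [Algebra.algebraMap_eq_smul_one, central_smul h]

theorem vx_module_eq {A : Set V} (hA : U.IsUltraset A)
    (i1 i2 : Module (LPA K U) (ModVx K U A))
    (h1 : @VxHyps V E K _ U A i1) (h2 : @VxHyps V E K _ U A i2) : i1 = i2 := by
  have key : ∀ (b : FreeAlgebra K (LGen U)) (m : ModVx K U A),
      aSmul i1 (RingQuot.mkAlgHom K (LRel K U) b) m =
        aSmul i2 (RingQuot.mkAlgHom K (LRel K U) b) m := by
    intro b
    induction b using FreeAlgebra.induction with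
    | grade0 r =>
      intro m
      rw [AlgHom.commutes]
      exact (algebraMap_smul' (inst := i1) h1 r m).trans
        (algebraMap_smul' (inst := i2) h2 r m).symm
    | grade1 g =>
      intro m
      induction m using Finsupp.induction with
      | zero => rw [aSmul_zero, aSmul_zero]
      | single_add z k mf _ _ ih =>
        rw [aSmul_add, aSmul_add, ih]
        congr 1
        cases g with
        | pr B =>
          by_cases hne : (B.1 ∩ U.srcSet z.1).Nonempty
          · exact (pGen_single_pos (inst := i1) h1 B.2 z k hne).trans
              (pGen_single_pos (inst := i2) h2 B.2 z k hne).symm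
          · exact (pGen_single_neg (inst := i1) h1 B.2 z k hne).trans
              (pGen_single_neg (inst := i2) h2 B.2 z k hne).symm
        | ed e =>
          by_cases hne : (U.r e ∩ U.srcSet z.1).Nonempty
          · exact (sGen_single_pos (inst := i1) hA h1 e z k hne).trans
              (sGen_single_pos (inst := i2) hA h2 e z k hne).symm
          · exact (sGen_single_neg (inst := i1) h1 e z k hne).trans
              (sGen_single_neg (inst := i2) h2 e z k hne).symm
        | st e =>
          by_cases hcase : ∃ l, z.1.1 = e :: l
          · obtain ⟨l, hl⟩ := hcase
            exact (stGen_single_pos (inst := i1) hA h1 e l z hl k).trans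
              (stGen_single_pos (inst := i2) hA h2 e l z hl k).symm
          · have hz : ∀ l, z.1.1 ≠ e :: l := fun l h₀ => hcase ⟨l, h₀⟩
            exact (stGen_single_neg (inst := i1) h1 e z hz k).trans
              (stGen_single_neg (inst := i2) h2 e z hz k).symm
    | mul a b iha ihb =>
      intro m
      rw [map_mul, aSmul_mul, aSmul_mul, ihb, iha]
    | add a b iha ihb =>
      intro m
      rw [map_add, aSmul_addL, aSmul_addL, iha, ihb]
  refine Module.ext' i1 i2 fun a m => ?_
  obtain ⟨b, rfl⟩ := RingQuot.mkAlgHom_surjective K (LRel K U) a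
  exact key b m

theorem equiv_of_eq {A B : Set V} (hA : U.IsUltraset A) (hB : U.IsUltraset B)
    [iA : Module (LPA K U) (ModVx K U A)] [iB : Module (LPA K U) (ModVx K U B)]
    (h1 : VxHyps K U A) (h2 : VxHyps K U B) (hEq : A = B) :
    Nonempty (ModVx K U A ≃ₗ[LPA K U] ModVx K U B) := by
  subst hEq
  obtain rfl : iA = iB := vx_module_eq hA iA iB h1 h2
  exact ⟨LinearEquiv.refl _ _⟩

end UltraProof


open Ultragraph in
/-- For `x, y ∈ Y_∞`, the module `V_x` (with basis
`{z ∈ 𝔭 : r(z) = r(x)}` and the prescribed action) is simple, `V_x ≅ V_y` iff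
`r(x) = r(y)` (equivalently the two bases coincide), and `End(V_x) ≅ K`. -/
theorem ultragraph_leavitt_Vx_simple
    (K : Type) [Field K] (V E : Type) [Countable V] [Countable E]
    (U : Ultragraph V E) (hns : U.HasNoSinks)
    (x y : List E × Set V)
    (hx : U.IsUPath x ∧ U.IsUltraset x.2 ∧ U.InfEmitterSet x.2)
    (hy : U.IsUPath y ∧ U.IsUltraset y.2 ∧ U.InfEmitterSet y.2)
    [instx : Module (LPA K U) (ModVx K U x.2)]
    [insty : Module (LPA K U) (ModVx K U y.2)]
    (hVx : VxHyps K U x.2) (hVy : VxHyps K U y.2) :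
    IsSimpleModule (LPA K U) (ModVx K U x.2) ∧
    (Nonempty (ModVx K U x.2 ≃ₗ[LPA K U] ModVx K U y.2) ↔ x.2 = y.2) ∧
    (x.2 = y.2 ↔
      {z : List E × Set V | U.IsUPath z ∧ z.2 = x.2} =
        {z : List E × Set V | U.IsUPath z ∧ z.2 = y.2}) ∧
    (∀ f : ModVx K U x.2 →ₗ[LPA K U] ModVx K U x.2,
      ∃! k : K, ∀ m : ModVx K U x.2, f m = k • m) := by
  refine ⟨UltraProof.simpleVx hx.2.1 hVx,
    ⟨fun hg => UltraProof.eq_of_equiv hx.2.1 hy.2.1 hVx hVy hg.some,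
     fun hEq => UltraProof.equiv_of_eq hx.2.1 hy.2.1 hVx hVy hEq⟩,
    ⟨fun hEq => by rw [hEq], fun hset => ?_⟩,
    fun f => UltraProof.hom_scalar hx.2.1 hVx f⟩
  have hz : (([] : List E), x.2) ∈ {z : List E × Set V | U.IsUPath z ∧ z.2 = x.2} :=
    ⟨⟨List.isChain_nil, hx.2.1.1, fun _ he => by simp at he⟩, rfl⟩
  rw [hset] at hz
  exact hz.2
end
end
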